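/- arXiv:1410.4941 — 3 statements merged into one kernel-verified Lean document; each statement's English description precedes it below -/
import Mathlib

section
/- Let α(1) ≥ α(2) ≥ … ≥ α(n), β(1) ≥ … ≥ β(n), γ(1) ≥ … ≥ γ(n) be three non-increasing sequences of non-negative real numbers that satisfy all Thompson–Freede inequalities: for every m ≤ n and all strictly increasing sequences (i_1,…,i_m) and (j_1,…,j_m) of integers in {1,…,n} with i_m + j_m ≤ n + m, one has ∑_{k=1}^m γ(i_k + j_k − k) ≤ ∑_{k=1}^m α(i_k) + ∑_{k=1}^m β(j_k). Let f : [0,∞) → [0,∞) be a concave function with f(0)=0. Then the sequences also satisfy the f-version of the Thompson–Freede inequalities: for every m ≤ n and all strictly increasing sequences (i_1,…,i_m) and (j_1,…,j_m) of integers in {1,…,n} with i_m + j_m ≤ n + m, one has ∑_{k=1}^m f(γ(i_k + j_k − k)) ≤ ∑_{k=1}^m f(α(i_k)) + ∑_{k=1}^m f(β(j_k)). -/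
open Finset

/-- A concave nonnegative function on `[0,∞)` with `f 0 = 0` is monotone. -/
lemma tf_concave_mono (f : ℝ → ℝ) (hconc : ConcaveOn ℝ (Set.Ici 0) f)
    (hfnonneg : ∀ x : ℝ, 0 ≤ x → 0 ≤ f x) :
    ∀ x y : ℝ, 0 ≤ x → x ≤ y → f x ≤ f y := by
  intro x y hx hxy
  rcases eq_or_lt_of_le hxy with rfl | hlt
  · exact le_refl _
  by_contra hcon
  push_neg at hcon
  have hy : (0:ℝ) ≤ y := le_trans hx hxy
  have hfx : 0 ≤ f x := hfnonneg x hx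
  have hfy : 0 ≤ f y := hfnonneg y hy
  have hd : 0 < f x - f y := by linarith
  set z : ℝ := y + (y - x) * f y / (f x - f y) + 1 with hz
  have hzy : y < z := by
    have h1 : 0 ≤ (y - x) * f y / (f x - f y) :=
      div_nonneg (mul_nonneg (by linarith) hfy) (le_of_lt hd)
    rw [hz]
    linarith
  have hzx : x < z := lt_trans hlt hzy
  have hz0 : (0:ℝ) ≤ z := le_trans hy (le_of_lt hzy)
  set a : ℝ := (z - y) / (z - x) with ha
  set b : ℝ := (y - x) / (z - x) with hb
  have hzx' : 0 < z - x := by linarith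
  have ha0 : 0 ≤ a := div_nonneg (by linarith) (le_of_lt hzx')
  have hb0 : 0 ≤ b := div_nonneg (by linarith) (le_of_lt hzx')
  have hab : a + b = 1 := by
    rw [ha, hb]
    field_simp
    ring
  have hcomb : a • x + b • z = y := by
    simp only [smul_eq_mul, ha, hb]
    field_simp
    ring
  have key := hconc.2 (Set.mem_Ici.mpr hx) (Set.mem_Ici.mpr hz0) ha0 hb0 hab
  rw [hcomb] at key
  simp only [smul_eq_mul] at key
  -- key : a * f x + b * f z ≤ f y
  have hbfz : 0 ≤ b * f z := mul_nonneg hb0 (hfnonneg z hz0)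
  have h1 : a * f x ≤ f y := by linarith
  -- but a * f x > f y
  have h2 : f y < a * f x := by
    rw [ha, div_mul_eq_mul_div, lt_div_iff₀ hzx']
    -- f y * (z - x) < (z - y) * f x
    have hexp : (z - y) * f x - f y * (z - x) = f x - f y := by
      have hne : f x - f y ≠ 0 := ne_of_gt hd
      field_simp [hz]
      linear_combination (f x - f y) * hz + div_mul_cancel₀ ((y - x) * f y) hne
    nlinarith [hexp]
  linarith

/-- Slope comparison for concave functions: far-right slopes are smaller. -/
lemma tf_slope_chain (f : ℝ → ℝ) (hconc : ConcaveOn ℝ (Set.Ici 0) f)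
    {x y u v : ℝ} (hx : 0 ≤ x) (hxy : x < y) (hyu : y ≤ u) (huv : u < v) :
    (f v - f u) / (v - u) ≤ (f y - f x) / (y - x) := by
  have hy : (0:ℝ) ≤ y := le_trans hx (le_of_lt hxy)
  have hu : (0:ℝ) ≤ u := le_trans hy hyu
  have hv : (0:ℝ) ≤ v := le_trans hu (le_of_lt huv)
  rcases eq_or_lt_of_le hyu with rfl | h
  · exact hconc.slope_anti_adjacent (Set.mem_Ici.mpr hx) (Set.mem_Ici.mpr hv) hxy huv
  · have h1 : (f u - f y) / (u - y) ≤ (f y - f x) / (y - x) :=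
      hconc.slope_anti_adjacent (Set.mem_Ici.mpr hx) (Set.mem_Ici.mpr hu) hxy h
    have h2 : (f v - f u) / (v - u) ≤ (f u - f y) / (u - y) :=
      hconc.slope_anti_adjacent (Set.mem_Ici.mpr hy) (Set.mem_Ici.mpr hv) h huv
    linarith

/-- Decomposition of a concave function on a finite set of nodes as a nonnegative
combination of functions `min x t`. -/
lemma tf_decomp : ∀ (S : Finset ℝ), 0 ∈ S → (∀ x ∈ S, 0 ≤ x) →
    ∀ f : ℝ → ℝ, ConcaveOn ℝ (Set.Ici 0) f → f 0 = 0 →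
    (∀ x ∈ S, ∀ y ∈ S, x ≤ y → f x ≤ f y) →
    ∃ (N : ℕ) (lam tau : ℕ → ℝ),
      (∀ i' < N, 0 ≤ lam i' ∧ tau i' ∈ S) ∧
      (∀ x ∈ S, f x = ∑ i' ∈ Finset.range N, lam i' * min x (tau i')) := by
  classical
  intro S
  induction S using Finset.strongInduction with
  | _ S IH =>
    intro h0 hnn f hconc hf0 hmono
    have hne : S.Nonempty := ⟨0, h0⟩
    set M := S.max' hne with hM
    have hMmem : M ∈ S := S.max'_mem hne
    by_cases hMpos : M ≤ 0
    · -- all elements are 0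
      refine ⟨0, 0, 0, by simp, ?_⟩
      intro x hx
      have hx0 : x = 0 := le_antisymm (le_trans (S.le_max' x hx) hMpos) (hnn x hx)
      simp [hx0, hf0]
    push_neg at hMpos
    set S' := S.erase M with hS'
    have h0' : (0:ℝ) ∈ S' := Finset.mem_erase.mpr ⟨ne_of_lt hMpos, h0⟩
    have hne' : S'.Nonempty := ⟨0, h0'⟩
    set M' := S'.max' hne' with hM'
    have hM'mem' : M' ∈ S' := S'.max'_mem hne'
    have hM'mem : M' ∈ S := Finset.mem_of_mem_erase hM'mem'
    have hM'M : M' < M := lt_of_le_of_ne (S.le_max' M' hM'mem) (Finset.ne_of_mem_erase hM'mem')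
    set lam0 : ℝ := (f M - f M') / (M - M') with hlam0def
    have hlam0 : 0 ≤ lam0 := by
      apply div_nonneg
      · have := hmono M' hM'mem M hMmem (le_of_lt hM'M)
        linarith
      · linarith
    set h : ℝ → ℝ := fun x => f x - lam0 * x with hh
    have hhconc : ConcaveOn ℝ (Set.Ici 0) h := by
      have hg : ConvexOn ℝ (Set.Ici 0) (fun x : ℝ => lam0 * x) := by
        have := (convexOn_id (convex_Ici (0:ℝ))).smul hlam0
        simpa [smul_eq_mul] using this
      have := hconc.sub hg
      exact this
    have hh0 : h 0 = 0 := by simp [hh, hf0]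
    have hhmono : ∀ x ∈ S', ∀ y ∈ S', x ≤ y → h x ≤ h y := by
      intro x hx y hy hxy
      rcases eq_or_lt_of_le hxy with rfl | hlt
      · exact le_refl _
      have hx0 : (0:ℝ) ≤ x := hnn x (Finset.mem_of_mem_erase hx)
      have hyM' : y ≤ M' := S'.le_max' y hy
      have hslope := tf_slope_chain f hconc hx0 hlt hyM' hM'M
      have hl : lam0 * (y - x) ≤ f y - f x := by
        rw [hlam0def, div_mul_eq_mul_div, div_le_iff₀ (by linarith : (0:ℝ) < M - M')]
        rw [div_le_div_iff₀ (by linarith) (by linarith)] at hslope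
        linarith
      simp only [hh]
      nlinarith
    have hss : S' ⊂ S := Finset.erase_ssubset hMmem
    obtain ⟨N', lam', tau', hprops', heq'⟩ :=
      IH S' hss h0' (fun x hx => hnn x (Finset.mem_of_mem_erase hx)) h hhconc hh0 hhmono
    refine ⟨N' + 1, (fun i' => if i' < N' then lam' i' else lam0),
      (fun i' => if i' < N' then tau' i' else M), ?_, ?_⟩
    · intro i' hi'
      by_cases hc : i' < N'
      · simp only [if_pos hc]
        exact ⟨(hprops' i' hc).1, Finset.mem_of_mem_erase (hprops' i' hc).2⟩
      · simp only [if_neg hc]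
        exact ⟨hlam0, hMmem⟩
    · intro x hx
      rw [Finset.sum_range_succ]
      simp only [lt_self_iff_false, if_false]
      have hsum_congr : ∀ y : ℝ, ∑ i' ∈ Finset.range N', (if i' < N' then lam' i' else lam0) *
          min y (if i' < N' then tau' i' else M) = ∑ i' ∈ Finset.range N', lam' i' * min y (tau' i') := by
        intro y
        apply Finset.sum_congr rfl
        intro i' hi'
        have : i' < N' := Finset.mem_range.mp hi'
        simp [this]
      rw [hsum_congr]
      by_cases hxM : x = M
      · subst hxM
        have hcancel : lam0 * (M - M') = f M - f M' := by
          rw [hlam0def]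
          exact div_mul_cancel₀ _ (ne_of_gt (by linarith : (0:ℝ) < M - M'))
        have hMM' : h M = h M' := by
          simp only [hh]
          linarith
        have hstep : ∑ i' ∈ Finset.range N', lam' i' * min M (tau' i')
            = ∑ i' ∈ Finset.range N', lam' i' * min M' (tau' i') := by
          apply Finset.sum_congr rfl
          intro i' hi'
          have ht : tau' i' ∈ S' := (hprops' i' (Finset.mem_range.mp hi')).2
          have h1 : tau' i' ≤ M' := S'.le_max' _ ht
          rw [min_eq_right h1, min_eq_right (le_trans h1 (le_of_lt hM'M))]
        have hhM' : h M' = ∑ i' ∈ Finset.range N', lam' i' * min M' (tau' i') :=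
          heq' M' hM'mem'
        have hhM : h M = f M - lam0 * M := by simp [hh]
        rw [hstep, ← hhM', ← hMM', hhM, min_self]
        ring
      · have hxS' : x ∈ S' := Finset.mem_erase.mpr ⟨hxM, hx⟩
        have hxle : x ≤ M := S.le_max' x hx
        have hhx : h x = f x - lam0 * x := by simp [hh]
        rw [← heq' x hxS', min_eq_left hxle, hhx]
        ring

lemma tf_gap {m : ℕ} {i : ℕ → ℕ} (hi : StrictMonoOn i (Set.Icc 1 m)) :
    ∀ d k, 1 ≤ k → k + d ≤ m → i k + d ≤ i (k + d) := by
  intro d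
  induction d with
  | zero => intro k _ _; simp
  | succ d IH =>
    intro k hk hkd
    have h1 : i k + d ≤ i (k + d) := IH k hk (by omega)
    have h2 : i (k + d) < i (k + d + 1) :=
      hi (Set.mem_Icc.mpr ⟨by omega, by omega⟩) (Set.mem_Icc.mpr ⟨by omega, by omega⟩) (by omega)
    have e : k + (d + 1) = k + d + 1 := by omega
    rw [e]
    omega

lemma tf_prefix (m : ℕ) (g : ℕ → ℝ)
    (hg : ∀ k l, 1 ≤ k → k ≤ l → l ≤ m → g l ≤ g k) (t : ℝ) :
    ∃ P, P ≤ m ∧ (∀ k, 1 ≤ k → k ≤ P → t < g k) ∧ (∀ k, P < k → k ≤ m → g k ≤ t) := by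
  classical
  set F := (Finset.Icc 1 m).filter (fun k => t < g k) with hF
  by_cases hne : F.Nonempty
  · set P := F.max' hne with hP
    have hPF : P ∈ F := F.max'_mem hne
    have hPm : P ∈ Finset.Icc 1 m := Finset.mem_of_mem_filter P hPF
    rw [Finset.mem_Icc] at hPm
    have hPg : t < g P := (Finset.mem_filter.mp hPF).2
    refine ⟨P, hPm.2, ?_, ?_⟩
    · intro k h1 h2
      exact lt_of_lt_of_le hPg (hg k P h1 h2 hPm.2)
    · intro k hk hkm
      by_contra hcon
      push_neg at hcon
      have hkF : k ∈ F := Finset.mem_filter.mpr ⟨Finset.mem_Icc.mpr ⟨by omega, hkm⟩, hcon⟩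
      have := F.le_max' k hkF
      omega
  · refine ⟨0, Nat.zero_le m, fun k h1 h2 => by omega, ?_⟩
    intro k hk hkm
    by_contra hcon
    push_neg at hcon
    exact hne ⟨k, Finset.mem_filter.mpr ⟨Finset.mem_Icc.mpr ⟨by omega, hkm⟩, hcon⟩⟩

lemma tf_shift (g : ℕ → ℝ) (c m' : ℕ) :
    ∑ k ∈ Finset.Ioc c (c + m'), g k = ∑ l ∈ Finset.Ioc 0 m', g (c + l) := by
  have h : Finset.Ioc c (c + m') = (Finset.Ioc 0 m').map (addLeftEmbedding c) := by
    rw [Finset.map_add_left_Ioc]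
    norm_num
  rw [h, Finset.sum_map]
  rfl

lemma tf_Icc_Ioc (m : ℕ) : Finset.Icc 1 m = Finset.Ioc 0 m := by
  ext x
  simp only [Finset.mem_Icc, Finset.mem_Ioc]
  omega

lemma tf_min {n : ℕ} (α β γ : ℕ → ℝ)
    (hα0 : ∀ k, 1 ≤ k → k ≤ n → 0 ≤ α k)
    (hβ0 : ∀ k, 1 ≤ k → k ≤ n → 0 ≤ β k)
    (hγ : ∀ k l, 1 ≤ k → k ≤ l → l ≤ n → γ l ≤ γ k)
    (hTF : ∀ m : ℕ, m ≤ n → ∀ i j : ℕ → ℕ,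
      StrictMonoOn i (Set.Icc 1 m) → StrictMonoOn j (Set.Icc 1 m) →
      (∀ k, 1 ≤ k → k ≤ m → 1 ≤ i k ∧ i k ≤ n) →
      (∀ k, 1 ≤ k → k ≤ m → 1 ≤ j k ∧ j k ≤ n) →
      i m + j m ≤ n + m →
      ∑ k ∈ Finset.Icc 1 m, γ (i k + j k - k) ≤
        ∑ k ∈ Finset.Icc 1 m, α (i k) + ∑ k ∈ Finset.Icc 1 m, β (j k))
    (t : ℝ) (ht : 0 ≤ t)
    (m : ℕ) (hmn : m ≤ n) (i j : ℕ → ℕ)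
    (hi : StrictMonoOn i (Set.Icc 1 m)) (hj : StrictMonoOn j (Set.Icc 1 m))
    (hib : ∀ k, 1 ≤ k → k ≤ m → 1 ≤ i k ∧ i k ≤ n)
    (hjb : ∀ k, 1 ≤ k → k ≤ m → 1 ≤ j k ∧ j k ≤ n)
    (hij : i m + j m ≤ n + m)
    (hA : ∀ k l, 1 ≤ k → k ≤ l → l ≤ m → α (i l) ≤ α (i k))
    (hB : ∀ k l, 1 ≤ k → k ≤ l → l ≤ m → β (j l) ≤ β (j k))
    (hik : ∀ k, 1 ≤ k → k ≤ m → k ≤ i k)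
    (hjk : ∀ k, 1 ≤ k → k ≤ m → k ≤ j k)
    (hσub : ∀ k, 1 ≤ k → k ≤ m → i k + j k - k ≤ n) :
    ∑ k ∈ Finset.Icc 1 m, min (γ (i k + j k - k)) t ≤
      ∑ k ∈ Finset.Icc 1 m, min (α (i k)) t + ∑ k ∈ Finset.Icc 1 m, min (β (j k)) t := by
  obtain ⟨Pa, hPam, hPa1, hPa2⟩ := tf_prefix m (fun k => α (i k)) hA t
  obtain ⟨Pb, hPbm, hPb1, hPb2⟩ := tf_prefix m (fun k => β (j k)) hB t
  rw [tf_Icc_Ioc]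
  -- RHS A part
  have hsplitA : (∑ k ∈ Finset.Ioc 0 Pa, min (α (i k)) t)
      + (∑ k ∈ Finset.Ioc Pa m, min (α (i k)) t)
      = ∑ k ∈ Finset.Ioc 0 m, min (α (i k)) t :=
    Finset.sum_Ioc_consecutive _ (Nat.zero_le Pa) hPam
  have hA1 : ∑ k ∈ Finset.Ioc 0 Pa, min (α (i k)) t = (Pa : ℝ) * t := by
    rw [Finset.sum_congr rfl (fun k hk => ?_), Finset.sum_const, Nat.card_Ioc, Nat.sub_zero,
      nsmul_eq_mul]
    rw [Finset.mem_Ioc] at hk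
    exact min_eq_right (le_of_lt (hPa1 k (by omega) hk.2))
  have hA2 : ∑ k ∈ Finset.Ioc Pa m, min (α (i k)) t = ∑ k ∈ Finset.Ioc Pa m, α (i k) := by
    refine Finset.sum_congr rfl (fun k hk => ?_)
    rw [Finset.mem_Ioc] at hk
    exact min_eq_left (hPa2 k hk.1 hk.2)
  have hsplitB : (∑ k ∈ Finset.Ioc 0 Pb, min (β (j k)) t)
      + (∑ k ∈ Finset.Ioc Pb m, min (β (j k)) t)
      = ∑ k ∈ Finset.Ioc 0 m, min (β (j k)) t :=
    Finset.sum_Ioc_consecutive _ (Nat.zero_le Pb) hPbm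
  have hB1 : ∑ k ∈ Finset.Ioc 0 Pb, min (β (j k)) t = (Pb : ℝ) * t := by
    rw [Finset.sum_congr rfl (fun k hk => ?_), Finset.sum_const, Nat.card_Ioc, Nat.sub_zero,
      nsmul_eq_mul]
    rw [Finset.mem_Ioc] at hk
    exact min_eq_right (le_of_lt (hPb1 k (by omega) hk.2))
  have hB2 : ∑ k ∈ Finset.Ioc Pb m, min (β (j k)) t = ∑ k ∈ Finset.Ioc Pb m, β (j k) := by
    refine Finset.sum_congr rfl (fun k hk => ?_)
    rw [Finset.mem_Ioc] at hk
    exact min_eq_left (hPb2 k hk.1 hk.2)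
  have htailA : 0 ≤ ∑ k ∈ Finset.Ioc Pa m, α (i k) := by
    refine Finset.sum_nonneg (fun k hk => ?_)
    rw [Finset.mem_Ioc] at hk
    exact hα0 (i k) (hib k (by omega) hk.2).1 (hib k (by omega) hk.2).2
  have htailB : 0 ≤ ∑ k ∈ Finset.Ioc Pb m, β (j k) := by
    refine Finset.sum_nonneg (fun k hk => ?_)
    rw [Finset.mem_Ioc] at hk
    exact hβ0 (j k) (hjb k (by omega) hk.2).1 (hjb k (by omega) hk.2).2
  by_cases hDm : m ≤ Pa + Pb
  · -- LHS ≤ m * t ≤ (Pa+Pb) * t ≤ RHS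
    have hLHS : ∑ k ∈ Finset.Ioc 0 m, min (γ (i k + j k - k)) t ≤ (m : ℝ) * t := by
      calc ∑ k ∈ Finset.Ioc 0 m, min (γ (i k + j k - k)) t
          ≤ ∑ _k ∈ Finset.Ioc 0 m, t := Finset.sum_le_sum (fun k _ => min_le_right _ _)
        _ = (m : ℝ) * t := by rw [Finset.sum_const, Nat.card_Ioc, Nat.sub_zero, nsmul_eq_mul]
    have hmt : (m : ℝ) * t ≤ ((Pa : ℝ) + (Pb : ℝ)) * t := by
      apply mul_le_mul_of_nonneg_right _ ht
      have : (m : ℝ) ≤ ((Pa + Pb : ℕ) : ℝ) := Nat.cast_le.mpr hDm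
      push_cast at this
      linarith
    rw [← hsplitA, ← hsplitB, hA1, hA2, hB1, hB2]
    nlinarith
  · push_neg at hDm
    set D := Pa + Pb with hD
    set m' := m - D with hm'
    -- the key Thompson-Freede application
    have hkey : ∑ k ∈ Finset.Ioc D m, γ (i k + j k - k)
        ≤ ∑ k ∈ Finset.Ioc Pa m, α (i k) + ∑ k ∈ Finset.Ioc Pb m, β (j k) := by
      have htf := hTF m' (by omega) (fun l => i (Pa + l)) (fun l => j (Pb + l))
        (fun a ha b hb hab => by
          rw [Set.mem_Icc] at ha hb
          exact hi (Set.mem_Icc.mpr ⟨by omega, by omega⟩)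
            (Set.mem_Icc.mpr ⟨by omega, by omega⟩) (by omega))
        (fun a ha b hb hab => by
          rw [Set.mem_Icc] at ha hb
          exact hj (Set.mem_Icc.mpr ⟨by omega, by omega⟩)
            (Set.mem_Icc.mpr ⟨by omega, by omega⟩) (by omega))
        (fun k h1 h2 => hib (Pa + k) (by omega) (by omega))
        (fun k h1 h2 => hjb (Pb + k) (by omega) (by omega))
        (by
          show i (Pa + m') + j (Pb + m') ≤ n + m'
          have g1 := tf_gap hi Pb (Pa + m') (by omega) (by omega)
          have e1 : Pa + m' + Pb = m := by omega
          rw [e1] at g1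
          have g2 := tf_gap hj Pa (Pb + m') (by omega) (by omega)
          have e2 : Pb + m' + Pa = m := by omega
          rw [e2] at g2
          omega)
      rw [tf_Icc_Ioc] at htf
      have hstep1 : ∑ k ∈ Finset.Ioc D m, γ (i k + j k - k)
          = ∑ l ∈ Finset.Ioc 0 m', γ (i (D + l) + j (D + l) - (D + l)) := by
        have e : m = D + m' := by omega
        rw [e]
        exact tf_shift (fun k => γ (i k + j k - k)) D m'
      have hstep2 : ∑ l ∈ Finset.Ioc 0 m', γ (i (D + l) + j (D + l) - (D + l))
          ≤ ∑ l ∈ Finset.Ioc 0 m', γ (i (Pa + l) + j (Pb + l) - l) := by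
        refine Finset.sum_le_sum (fun l hl => ?_)
        rw [Finset.mem_Ioc] at hl
        have g1 := tf_gap hi Pb (Pa + l) (by omega) (by omega)
        have e1 : Pa + l + Pb = D + l := by omega
        rw [e1] at g1
        have g2 := tf_gap hj Pa (Pb + l) (by omega) (by omega)
        have e2 : Pb + l + Pa = D + l := by omega
        rw [e2] at g2
        have hia := hik (Pa + l) (by omega) (by omega)
        have hjb' := (hjb (Pb + l) (by omega) (by omega)).1
        apply hγ
        · omega
        · omega
        · exact hσub (D + l) (by omega) (by omega)
      have hstep3 : ∑ l ∈ Finset.Ioc 0 m', α (i (Pa + l)) ≤ ∑ k ∈ Finset.Ioc Pa m, α (i k) := by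
        rw [← tf_shift (fun k => α (i k)) Pa m']
        refine Finset.sum_le_sum_of_subset_of_nonneg ?_ (fun k hk _ => ?_)
        · apply Finset.Ioc_subset_Ioc le_rfl
          omega
        · rw [Finset.mem_Ioc] at hk
          exact hα0 (i k) (hib k (by omega) hk.2).1 (hib k (by omega) hk.2).2
      have hstep4 : ∑ l ∈ Finset.Ioc 0 m', β (j (Pb + l)) ≤ ∑ k ∈ Finset.Ioc Pb m, β (j k) := by
        rw [← tf_shift (fun k => β (j k)) Pb m']
        refine Finset.sum_le_sum_of_subset_of_nonneg ?_ (fun k hk _ => ?_)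
        · apply Finset.Ioc_subset_Ioc le_rfl
          omega
        · rw [Finset.mem_Ioc] at hk
          exact hβ0 (j k) (hjb k (by omega) hk.2).1 (hjb k (by omega) hk.2).2
      calc ∑ k ∈ Finset.Ioc D m, γ (i k + j k - k)
          = ∑ l ∈ Finset.Ioc 0 m', γ (i (D + l) + j (D + l) - (D + l)) := hstep1
        _ ≤ ∑ l ∈ Finset.Ioc 0 m', γ (i (Pa + l) + j (Pb + l) - l) := hstep2
        _ ≤ ∑ l ∈ Finset.Ioc 0 m', α (i (Pa + l)) + ∑ l ∈ Finset.Ioc 0 m', β (j (Pb + l)) := htf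
        _ ≤ ∑ k ∈ Finset.Ioc Pa m, α (i k) + ∑ k ∈ Finset.Ioc Pb m, β (j k) := by
            exact add_le_add hstep3 hstep4
    -- now split LHS
    have hsplitC : (∑ k ∈ Finset.Ioc 0 D, min (γ (i k + j k - k)) t)
        + (∑ k ∈ Finset.Ioc D m, min (γ (i k + j k - k)) t)
        = ∑ k ∈ Finset.Ioc 0 m, min (γ (i k + j k - k)) t :=
      Finset.sum_Ioc_consecutive _ (Nat.zero_le D) (by omega)
    have hC1 : ∑ k ∈ Finset.Ioc 0 D, min (γ (i k + j k - k)) t ≤ (D : ℝ) * t := by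
      calc ∑ k ∈ Finset.Ioc 0 D, min (γ (i k + j k - k)) t
          ≤ ∑ _k ∈ Finset.Ioc 0 D, t := Finset.sum_le_sum (fun k _ => min_le_right _ _)
        _ = (D : ℝ) * t := by rw [Finset.sum_const, Nat.card_Ioc, Nat.sub_zero, nsmul_eq_mul]
    have hC2 : ∑ k ∈ Finset.Ioc D m, min (γ (i k + j k - k)) t
        ≤ ∑ k ∈ Finset.Ioc D m, γ (i k + j k - k) :=
      Finset.sum_le_sum (fun k _ => min_le_left _ _)
    rw [← hsplitA, ← hsplitB, ← hsplitC, hA1, hA2, hB1, hB2]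
    have hcast : (D : ℝ) = (Pa : ℝ) + (Pb : ℝ) := by
      rw [hD]
      push_cast
      ring
    nlinarith

theorem stmt3 {n : ℕ} (α β γ : ℕ → ℝ)
    (hα0 : ∀ k, 1 ≤ k → k ≤ n → 0 ≤ α k)
    (hβ0 : ∀ k, 1 ≤ k → k ≤ n → 0 ≤ β k)
    (hγ0 : ∀ k, 1 ≤ k → k ≤ n → 0 ≤ γ k)
    (hα : ∀ k l, 1 ≤ k → k ≤ l → l ≤ n → α l ≤ α k)
    (hβ : ∀ k l, 1 ≤ k → k ≤ l → l ≤ n → β l ≤ β k)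
    (hγ : ∀ k l, 1 ≤ k → k ≤ l → l ≤ n → γ l ≤ γ k)
    (hTF : ∀ m : ℕ, m ≤ n → ∀ i j : ℕ → ℕ,
      StrictMonoOn i (Set.Icc 1 m) → StrictMonoOn j (Set.Icc 1 m) →
      (∀ k, 1 ≤ k → k ≤ m → 1 ≤ i k ∧ i k ≤ n) →
      (∀ k, 1 ≤ k → k ≤ m → 1 ≤ j k ∧ j k ≤ n) →
      i m + j m ≤ n + m →
      ∑ k ∈ Finset.Icc 1 m, γ (i k + j k - k) ≤
        ∑ k ∈ Finset.Icc 1 m, α (i k) + ∑ k ∈ Finset.Icc 1 m, β (j k))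
    (f : ℝ → ℝ)
    (hconc : ConcaveOn ℝ (Set.Ici 0) f) (hf0 : f 0 = 0)
    (hfnonneg : ∀ x : ℝ, 0 ≤ x → 0 ≤ f x) :
    ∀ m : ℕ, m ≤ n → ∀ i j : ℕ → ℕ,
      StrictMonoOn i (Set.Icc 1 m) → StrictMonoOn j (Set.Icc 1 m) →
      (∀ k, 1 ≤ k → k ≤ m → 1 ≤ i k ∧ i k ≤ n) →
      (∀ k, 1 ≤ k → k ≤ m → 1 ≤ j k ∧ j k ≤ n) →
      i m + j m ≤ n + m →
      ∑ k ∈ Finset.Icc 1 m, f (γ (i k + j k - k)) ≤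
        ∑ k ∈ Finset.Icc 1 m, f (α (i k)) + ∑ k ∈ Finset.Icc 1 m, f (β (j k)) := by
  classical
  intro m hmn i j hi hj hib hjb hij
  -- basic monotonicity facts for the composed sequences
  have hik : ∀ k, 1 ≤ k → k ≤ m → k ≤ i k := by
    intro k h1 h2
    have h := tf_gap hi (k - 1) 1 le_rfl (by omega)
    have e : 1 + (k - 1) = k := by omega
    rw [e] at h
    have := (hib 1 le_rfl (by omega)).1
    omega
  have hjk : ∀ k, 1 ≤ k → k ≤ m → k ≤ j k := by
    intro k h1 h2
    have h := tf_gap hj (k - 1) 1 le_rfl (by omega)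
    have e : 1 + (k - 1) = k := by omega
    rw [e] at h
    have := (hjb 1 le_rfl (by omega)).1
    omega
  have himon : ∀ k l, 1 ≤ k → k ≤ l → l ≤ m → i k ≤ i l := by
    intro k l h1 h2 h3
    rcases eq_or_lt_of_le h2 with rfl | h
    · exact le_rfl
    · exact le_of_lt (hi (Set.mem_Icc.mpr ⟨h1, by omega⟩) (Set.mem_Icc.mpr ⟨by omega, h3⟩) h)
  have hjmon : ∀ k l, 1 ≤ k → k ≤ l → l ≤ m → j k ≤ j l := by
    intro k l h1 h2 h3
    rcases eq_or_lt_of_le h2 with rfl | h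
    · exact le_rfl
    · exact le_of_lt (hj (Set.mem_Icc.mpr ⟨h1, by omega⟩) (Set.mem_Icc.mpr ⟨by omega, h3⟩) h)
  have hA : ∀ k l, 1 ≤ k → k ≤ l → l ≤ m → α (i l) ≤ α (i k) := by
    intro k l h1 h2 h3
    exact hα (i k) (i l) (hib k h1 (by omega)).1 (himon k l h1 h2 h3) (hib l (by omega) h3).2
  have hB : ∀ k l, 1 ≤ k → k ≤ l → l ≤ m → β (j l) ≤ β (j k) := by
    intro k l h1 h2 h3
    exact hβ (j k) (j l) (hjb k h1 (by omega)).1 (hjmon k l h1 h2 h3) (hjb l (by omega) h3).2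
  have hσle : ∀ k l, 1 ≤ k → k ≤ l → l ≤ m →
      i k + j k - k + (l - k) ≤ i l + j l - l := by
    intro k l h1 h2 h3
    have gi := tf_gap hi (l - k) k h1 (by omega)
    have gj := tf_gap hj (l - k) k h1 (by omega)
    have e : k + (l - k) = l := by omega
    rw [e] at gi gj
    have := hik k h1 (by omega)
    have := (hjb k h1 (by omega)).1
    omega
  have hσub : ∀ k, 1 ≤ k → k ≤ m → i k + j k - k ≤ n := by
    intro k h1 h2
    have h := hσle k m h1 h2 le_rfl
    have := hik m (by omega) le_rfl
    omega
  have hσlb : ∀ k, 1 ≤ k → k ≤ m → 1 ≤ i k + j k - k := by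
    intro k h1 h2
    have := hik k h1 h2
    have := (hjb k h1 h2).1
    omega
  -- the node set
  set S : Finset ℝ := insert 0 (((Finset.Icc 1 m).image (fun k => α (i k)))
    ∪ ((Finset.Icc 1 m).image (fun k => β (j k)))
    ∪ ((Finset.Icc 1 m).image (fun k => γ (i k + j k - k)))) with hS
  have hS0 : (0:ℝ) ∈ S := Finset.mem_insert_self _ _
  have hSnn : ∀ x ∈ S, (0:ℝ) ≤ x := by
    intro x hx
    rw [hS, Finset.mem_insert, Finset.mem_union, Finset.mem_union] at hx
    rcases hx with rfl | (hx | hx) | hx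
    · exact le_rfl
    · obtain ⟨k, hk, rfl⟩ := Finset.mem_image.mp hx
      rw [Finset.mem_Icc] at hk
      exact hα0 _ (hib k hk.1 hk.2).1 (hib k hk.1 hk.2).2
    · obtain ⟨k, hk, rfl⟩ := Finset.mem_image.mp hx
      rw [Finset.mem_Icc] at hk
      exact hβ0 _ (hjb k hk.1 hk.2).1 (hjb k hk.1 hk.2).2
    · obtain ⟨k, hk, rfl⟩ := Finset.mem_image.mp hx
      rw [Finset.mem_Icc] at hk
      exact hγ0 _ (hσlb k hk.1 hk.2) (hσub k hk.1 hk.2)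
  have hSmono : ∀ x ∈ S, ∀ y ∈ S, x ≤ y → f x ≤ f y := by
    intro x hx y _ hxy
    exact tf_concave_mono f hconc hfnonneg x y (hSnn x hx) hxy
  obtain ⟨N, lam, tau, hprops, heq⟩ := tf_decomp S hS0 hSnn f hconc hf0 hSmono
  have hCmem : ∀ k ∈ Finset.Icc 1 m, γ (i k + j k - k) ∈ S := by
    intro k hk
    rw [hS, Finset.mem_insert, Finset.mem_union, Finset.mem_union]
    exact Or.inr (Or.inr (Finset.mem_image.mpr ⟨k, hk, rfl⟩))
  have hAmem : ∀ k ∈ Finset.Icc 1 m, α (i k) ∈ S := by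
    intro k hk
    rw [hS, Finset.mem_insert, Finset.mem_union, Finset.mem_union]
    exact Or.inr (Or.inl (Or.inl (Finset.mem_image.mpr ⟨k, hk, rfl⟩)))
  have hBmem : ∀ k ∈ Finset.Icc 1 m, β (j k) ∈ S := by
    intro k hk
    rw [hS, Finset.mem_insert, Finset.mem_union, Finset.mem_union]
    exact Or.inr (Or.inl (Or.inr (Finset.mem_image.mpr ⟨k, hk, rfl⟩)))
  calc ∑ k ∈ Finset.Icc 1 m, f (γ (i k + j k - k))
      = ∑ k ∈ Finset.Icc 1 m, ∑ i' ∈ Finset.range N,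
          lam i' * min (γ (i k + j k - k)) (tau i') :=
        Finset.sum_congr rfl (fun k hk => heq _ (hCmem k hk))
    _ = ∑ i' ∈ Finset.range N, ∑ k ∈ Finset.Icc 1 m,
          lam i' * min (γ (i k + j k - k)) (tau i') := Finset.sum_comm
    _ ≤ ∑ i' ∈ Finset.range N, (∑ k ∈ Finset.Icc 1 m, lam i' * min (α (i k)) (tau i')
          + ∑ k ∈ Finset.Icc 1 m, lam i' * min (β (j k)) (tau i')) := by
        refine Finset.sum_le_sum (fun i' hi' => ?_)
        obtain ⟨hl, htau⟩ := hprops i' (Finset.mem_range.mp hi')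
        have ht0 : 0 ≤ tau i' := hSnn _ htau
        have hmin := tf_min α β γ hα0 hβ0 hγ hTF (tau i') ht0 m hmn i j hi hj hib hjb hij
          hA hB hik hjk hσub
        rw [← Finset.mul_sum, ← Finset.mul_sum, ← Finset.mul_sum, ← mul_add]
        exact mul_le_mul_of_nonneg_left hmin hl
    _ = (∑ i' ∈ Finset.range N, ∑ k ∈ Finset.Icc 1 m, lam i' * min (α (i k)) (tau i'))
          + ∑ i' ∈ Finset.range N, ∑ k ∈ Finset.Icc 1 m, lam i' * min (β (j k)) (tau i') :=
        Finset.sum_add_distrib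
    _ = (∑ k ∈ Finset.Icc 1 m, ∑ i' ∈ Finset.range N, lam i' * min (α (i k)) (tau i'))
          + ∑ k ∈ Finset.Icc 1 m, ∑ i' ∈ Finset.range N, lam i' * min (β (j k)) (tau i') := by
        rw [Finset.sum_comm (s := Finset.range N) (t := Finset.Icc 1 m),
          Finset.sum_comm (s := Finset.range N) (t := Finset.Icc 1 m)]
    _ = ∑ k ∈ Finset.Icc 1 m, f (α (i k)) + ∑ k ∈ Finset.Icc 1 m, f (β (j k)) := by
        rw [Finset.sum_congr rfl (fun k hk => (heq _ (hAmem k hk)).symm),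
          Finset.sum_congr rfl (fun k hk => (heq _ (hBmem k hk)).symm)]
end

section
/- Let α(1) ≥ α(2) ≥ … ≥ α(n), β(1) ≥ … ≥ β(n), γ(1) ≥ … ≥ γ(n) be three non-increasing sequences of non-negative real numbers that satisfy all Thompson–Freede inequalities. Let m ≤ n, and let (i_1,…,i_m) and (j_1,…,j_m) be strictly increasing sequences of integers in {1,…,n} with i_m + j_m ≤ n + m. Then for any integers a, b ≥ 1 with a + b − 1 ≤ m, one has ∑_{k=a+b−1}^{m} γ(i_k + j_k − k) ≤ ∑_{k=a}^{m−b+1} α(i_k) + ∑_{k=b}^{m−a+1} β(j_k). -/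
lemma shift_sum' (f : ℕ → ℝ) (c u v : ℕ) :
    ∑ k ∈ Finset.Icc (u + c) (v + c), f k = ∑ k ∈ Finset.Icc u v, f (k + c) := by
  rw [← Finset.map_add_right_Icc, Finset.sum_map]
  rfl

lemma gap_lemma (f : ℕ → ℕ) (m : ℕ) (hf : StrictMonoOn f (Set.Icc 1 m)) :
    ∀ k l, 1 ≤ k → k ≤ l → l ≤ m → f k + (l - k) ≤ f l := by
  have key : ∀ d k, 1 ≤ k → k + d ≤ m → f k + d ≤ f (k + d) := by
    intro d
    induction d with
    | zero => intro k _ _; simp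
    | succ d ih =>
      intro k hk hkd
      have h1 := ih k hk (by omega)
      have h2 : f (k + d) < f (k + d + 1) :=
        hf (Set.mem_Icc.2 ⟨by omega, by omega⟩) (Set.mem_Icc.2 ⟨by omega, by omega⟩) (by omega)
      have h3 : k + (d + 1) = k + d + 1 := by omega
      rw [h3]
      omega
  intro k l hk hkl hlm
  have := key (l - k) k hk (by omega)
  rwa [Nat.add_sub_cancel' hkl] at this

theorem stmt4 {n : ℕ} (α β γ : ℕ → ℝ)
    (hα0 : ∀ k, 1 ≤ k → k ≤ n → 0 ≤ α k)
    (hβ0 : ∀ k, 1 ≤ k → k ≤ n → 0 ≤ β k)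
    (hγ0 : ∀ k, 1 ≤ k → k ≤ n → 0 ≤ γ k)
    (hα : ∀ k l, 1 ≤ k → k ≤ l → l ≤ n → α l ≤ α k)
    (hβ : ∀ k l, 1 ≤ k → k ≤ l → l ≤ n → β l ≤ β k)
    (hγ : ∀ k l, 1 ≤ k → k ≤ l → l ≤ n → γ l ≤ γ k)
    (hTF : ∀ m : ℕ, m ≤ n → ∀ i j : ℕ → ℕ,
      StrictMonoOn i (Set.Icc 1 m) → StrictMonoOn j (Set.Icc 1 m) →
      (∀ k, 1 ≤ k → k ≤ m → 1 ≤ i k ∧ i k ≤ n) →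
      (∀ k, 1 ≤ k → k ≤ m → 1 ≤ j k ∧ j k ≤ n) →
      i m + j m ≤ n + m →
      ∑ k ∈ Finset.Icc 1 m, γ (i k + j k - k) ≤
        ∑ k ∈ Finset.Icc 1 m, α (i k) + ∑ k ∈ Finset.Icc 1 m, β (j k))
    (m : ℕ) (hm : m ≤ n) (i j : ℕ → ℕ)
    (hi : StrictMonoOn i (Set.Icc 1 m)) (hj : StrictMonoOn j (Set.Icc 1 m))
    (hiran : ∀ k, 1 ≤ k → k ≤ m → 1 ≤ i k ∧ i k ≤ n)
    (hjran : ∀ k, 1 ≤ k → k ≤ m → 1 ≤ j k ∧ j k ≤ n)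
    (hconstr : i m + j m ≤ n + m)
    (a b : ℕ) (ha : 1 ≤ a) (hb : 1 ≤ b) (hab : a + b - 1 ≤ m) :
    ∑ k ∈ Finset.Icc (a + b - 1) m, γ (i k + j k - k) ≤
      ∑ k ∈ Finset.Icc a (m + 1 - b), α (i k) +
        ∑ k ∈ Finset.Icc b (m + 1 - a), β (j k) := by
  obtain ⟨A, rfl⟩ : ∃ A, a = A + 1 := ⟨a - 1, by omega⟩
  obtain ⟨B, rfl⟩ : ∃ B, b = B + 1 := ⟨b - 1, by omega⟩
  obtain ⟨M, rfl⟩ : ∃ M, m = (M + 1) + A + B := ⟨m - 1 - A - B, by omega⟩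
  set m' := M + 1 with hm'
  have hm'' : m' + A + B = (M + 1) + A + B := rfl
  set I : ℕ → ℕ := fun t => i (t + A) with hI
  set J : ℕ → ℕ := fun t => j (t + B) with hJ
  have gi := gap_lemma i _ hi
  have gj := gap_lemma j _ hj
  have hi1 : ∀ k, 1 ≤ k → k ≤ m' + A + B → k ≤ i k := by
    intro k hk hkm
    have := gi 1 k le_rfl hk (by omega)
    have := (hiran 1 le_rfl (by omega)).1
    omega
  have hj1 : ∀ k, 1 ≤ k → k ≤ m' + A + B → k ≤ j k := by
    intro k hk hkm
    have := gj 1 k le_rfl hk (by omega)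
    have := (hjran 1 le_rfl (by omega)).1
    omega
  have hIm : StrictMonoOn I (Set.Icc 1 m') := by
    intro x hx y hy hxy
    have hx' := Set.mem_Icc.1 hx
    have hy' := Set.mem_Icc.1 hy
    exact hi (Set.mem_Icc.2 ⟨by omega, by omega⟩) (Set.mem_Icc.2 ⟨by omega, by omega⟩) (by omega)
  have hJm : StrictMonoOn J (Set.Icc 1 m') := by
    intro x hx y hy hxy
    have hx' := Set.mem_Icc.1 hx
    have hy' := Set.mem_Icc.1 hy
    exact hj (Set.mem_Icc.2 ⟨by omega, by omega⟩) (Set.mem_Icc.2 ⟨by omega, by omega⟩) (by omega)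
  have hIran : ∀ k, 1 ≤ k → k ≤ m' → 1 ≤ I k ∧ I k ≤ n := fun k hk hkm =>
    hiran (k + A) (by omega) (by omega)
  have hJran : ∀ k, 1 ≤ k → k ≤ m' → 1 ≤ J k ∧ J k ≤ n := fun k hk hkm =>
    hjran (k + B) (by omega) (by omega)
  have hIc : I m' + B ≤ i (m' + A + B) := by
    show i (m' + A) + B ≤ i (m' + A + B)
    have := gi (m' + A) (m' + A + B) (by omega) (by omega) (by omega)
    omega
  have hJc : J m' + A ≤ j (m' + A + B) := by
    show j (m' + B) + A ≤ j (m' + A + B)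
    have := gj (m' + B) (m' + A + B) (by omega) (by omega) (by omega)
    omega
  have hconstr' : I m' + J m' ≤ n + m' := by omega
  have key := hTF m' (by omega) I J hIm hJm hIran hJran hconstr'
  have hsumα : ∑ k ∈ Finset.Icc (A + 1) ((M + 1) + A + B + 1 - (B + 1)), α (i k)
      = ∑ k ∈ Finset.Icc 1 m', α (I k) := by
    have h1 : (M + 1) + A + B + 1 - (B + 1) = m' + A := by omega
    rw [h1, show A + 1 = 1 + A by omega, shift_sum']
  have hsumβ : ∑ k ∈ Finset.Icc (B + 1) ((M + 1) + A + B + 1 - (A + 1)), β (j k)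
      = ∑ k ∈ Finset.Icc 1 m', β (J k) := by
    have h1 : (M + 1) + A + B + 1 - (A + 1) = m' + B := by omega
    rw [h1, show B + 1 = 1 + B by omega, shift_sum']
  have hsumγ : ∑ k ∈ Finset.Icc (A + 1 + (B + 1) - 1) ((M + 1) + A + B), γ (i k + j k - k)
      = ∑ t ∈ Finset.Icc 1 m', γ (i (t + A + B) + j (t + A + B) - (t + A + B)) := by
    have h1 : A + 1 + (B + 1) - 1 = 1 + (A + B) := by omega
    have h2 : (M + 1) + A + B = m' + (A + B) := by omega
    rw [h1, h2, shift_sum']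
    apply Finset.sum_congr rfl
    intro t _
    rw [show t + (A + B) = t + A + B by omega]
  rw [hsumγ, hsumα, hsumβ]
  refine le_trans (Finset.sum_le_sum ?_) key
  intro t ht
  obtain ⟨ht1, ht2⟩ := Finset.mem_Icc.1 ht
  have hIt : I t = i (t + A) := rfl
  have hJt : J t = j (t + B) := rfl
  have hiB : i (t + A) + B ≤ i (t + A + B) := by
    have := gi (t + A) (t + A + B) (by omega) (by omega) (by omega); omega
  have hjA : j (t + B) + A ≤ j (t + A + B) := by
    have := gj (t + B) (t + A + B) (by omega) (by omega) (by omega); omega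
  have hit : t + A ≤ i (t + A) := hi1 _ (by omega) (by omega)
  have hjt : t + B ≤ j (t + B) := hj1 _ (by omega) (by omega)
  have hgap_i := gi (t + A + B) (m' + A + B) (by omega) (by omega) (by omega)
  have hgap_j := gj (t + A + B) (m' + A + B) (by omega) (by omega) (by omega)
  have him := (hiran (m' + A + B) (by omega) (by omega)).2
  have hjm := (hjran (m' + A + B) (by omega) (by omega)).2
  apply hγ <;> omega
end

section
/- Let A and B be n×n complex matrices, with singular values α(i) = σ_i(A), β(i) = σ_i(B), and γ(i) = σ_i(A+B) in non-increasing order. Let b ≥ 1 be an integer, let K₃ and K₄ be disjoint finite index sets, and for each k ∈ K₃ ∪ K₄ let (t_k, s_k) be a pair of integers with 1 ≤ t_k ≤ s_k ≤ n and s_k − t_k ≥ b − 1, such that all the t_k for k ∈ K₃ are distinct, all the s_k for k ∈ K₄ are distinct, and the sets {t_k : k ∈ K₃} and {s_k : k ∈ K₄} are disjoint. Set r = |K₃| + |K₄|, and assume b + r − 1 ≤ n. Then ∑_{k∈K₃} γ(s_k) − ∑_{k∈K₄} γ(t_k) ≤ ∑_{k∈K₃} α(t_k) − ∑_{k∈K₄}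 α(s_k) + ∑_{k=b}^{b+r−1} β(k). -/
set_option linter.unusedSectionVars false
set_option maxHeartbeats 1000000

/-- `svals M k` is the `k`-th largest singular value of `M` (1-based indexing `k = 1,…,n`). -/
noncomputable def svals {n : ℕ} (M : Matrix (Fin n) (Fin n) ℂ) (k : ℕ) : ℝ :=
  let e : Fin n → ℝ := fun i =>
    Real.sqrt ((Matrix.isHermitian_conjTranspose_mul_self M).eigenvalues i)
  if h : k - 1 < n then e (Tuple.sort e (Fin.rev ⟨k - 1, h⟩)) else 0

open Matrix BigOperators Finset

namespace SVaux

variable {m : ℕ}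

/-- real quadratic form of a matrix -/
noncomputable def qf (W : Matrix (Fin m) (Fin m) ℂ) (x : Fin m → ℂ) : ℝ :=
  (star x ⬝ᵥ (W *ᵥ x)).re

/-- squared norm -/
noncomputable def nsq (x : Fin m → ℂ) : ℝ := (star x ⬝ᵥ x).re

lemma star_dot_self_eq (x : Fin m → ℂ) :
    star x ⬝ᵥ x = ((∑ i, Complex.normSq (x i) : ℝ) : ℂ) := by
  simp only [dotProduct, Pi.star_apply, Complex.ofReal_sum]
  refine Finset.sum_congr rfl fun i _ => ?_
  rw [Complex.star_def, mul_comm, Complex.mul_conj]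

lemma nsq_eq (x : Fin m → ℂ) : nsq x = ∑ i, Complex.normSq (x i) := by
  rw [nsq, star_dot_self_eq, Complex.ofReal_re]

lemma nsq_nonneg (x : Fin m → ℂ) : 0 ≤ nsq x := by
  rw [nsq_eq]; exact Finset.sum_nonneg fun i _ => Complex.normSq_nonneg _

lemma nsq_pos {x : Fin m → ℂ} (hx : x ≠ 0) : 0 < nsq x := by
  rw [nsq_eq]
  obtain ⟨i, hi⟩ : ∃ i, x i ≠ 0 := by
    by_contra h; push_neg at h; exact hx (funext h)
  exact Finset.sum_pos' (fun j _ => Complex.normSq_nonneg _)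
    ⟨i, Finset.mem_univ i, Complex.normSq_pos.2 hi⟩

lemma eq_zero_of_nsq_nonpos {x : Fin m → ℂ} (hx : nsq x ≤ 0) : x = 0 := by
  by_contra h; exact absurd hx (not_le.2 (nsq_pos h))

lemma qf_add (W W' : Matrix (Fin m) (Fin m) ℂ) (x : Fin m → ℂ) :
    qf (W + W') x = qf W x + qf W' x := by
  simp [qf, add_mulVec, dotProduct_add]

lemma qf_smul_one (c : ℝ) (x : Fin m → ℂ) : qf ((c : ℂ) • 1) x = c * nsq x := by
  rw [qf, smul_mulVec, one_mulVec, dotProduct_smul, nsq]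
  simp [Complex.re_ofReal_mul]

/-- adjoint relation for the sesquilinear form -/
lemma dot_adj (N : Matrix (Fin m) (Fin m) ℂ) (a b : Fin m → ℂ) :
    star a ⬝ᵥ (N *ᵥ b) = star (star b ⬝ᵥ (Nᴴ *ᵥ a)) := by
  rw [star_dotProduct, star_mulVec, ← dotProduct_mulVec]

lemma star_dot_comm (a b : Fin m → ℂ) : star b ⬝ᵥ a = star (star a ⬝ᵥ b) :=
  star_dotProduct b a

section sums

variable {ι : Type*} [Fintype ι] [DecidableEq ι]

lemma sum_dot (s : Finset ι) (f : ι → Fin m → ℂ) (w : Fin m → ℂ) :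
    (∑ i ∈ s, f i) ⬝ᵥ w = ∑ i ∈ s, f i ⬝ᵥ w := by
  simp only [dotProduct, Finset.sum_apply, Finset.sum_mul]
  exact Finset.sum_comm

lemma dot_sum (s : Finset ι) (w : Fin m → ℂ) (f : ι → Fin m → ℂ) :
    w ⬝ᵥ (∑ i ∈ s, f i) = ∑ i ∈ s, w ⬝ᵥ f i := by
  simp only [dotProduct, Finset.sum_apply, Finset.mul_sum]
  exact Finset.sum_comm

lemma mulVec_finsum (W : Matrix (Fin m) (Fin m) ℂ) (s : Finset ι) (f : ι → Fin m → ℂ) :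
    W *ᵥ (∑ i ∈ s, f i) = ∑ i ∈ s, W *ᵥ f i := by
  simp only [← Matrix.mulVecLin_apply]; exact map_sum _ _ _

lemma image_coe_eq_range (z : ι → (Fin m → ℂ)) (T : Finset ι) :
    z '' (T : Set ι) = Set.range (fun i : T => z i) := by
  rw [show (fun i : T => z i) = z ∘ ((↑) : T → ι) from rfl, Set.range_comp,
    Subtype.range_coe_subtype, Finset.setOf_mem]

lemma mem_span_rep {z : ι → (Fin m → ℂ)} {T : Finset ι} {x : Fin m → ℂ}
    (hx : x ∈ Submodule.span ℂ (z '' (T : Set ι))) :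
    ∃ a : ι → ℂ, x = ∑ i ∈ T, a i • z i := by
  rw [image_coe_eq_range, Submodule.mem_span_range_iff_exists_fun] at hx
  obtain ⟨c, hc⟩ := hx
  refine ⟨fun i => if h : i ∈ T then c ⟨i, h⟩ else 0, ?_⟩
  rw [← hc, Finset.univ_eq_attach, ← Finset.sum_attach T
    (fun i => (if h : i ∈ T then c ⟨i, h⟩ else 0) • z i)]
  refine Finset.sum_congr rfl fun i _ => ?_
  rw [dif_pos i.2]

/-- orthonormality on a finset -/
def OrthoOn (z : ι → (Fin m → ℂ)) (T : Finset ι) : Prop :=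
  ∀ i ∈ T, ∀ j ∈ T, star (z i) ⬝ᵥ z j = if i = j then 1 else 0

lemma dot_combo {z : ι → (Fin m → ℂ)} {T : Finset ι} (ho : OrthoOn z T)
    (a c : ι → ℂ) :
    star (∑ i ∈ T, a i • z i) ⬝ᵥ (∑ j ∈ T, c j • z j)
      = ∑ i ∈ T, star (a i) * c i := by
  rw [star_sum, sum_dot]
  refine Finset.sum_congr rfl fun i hi => ?_
  rw [star_smul, dot_sum]
  have : ∀ j ∈ T, star (a i) • star (z i) ⬝ᵥ c j • z j
      = if j = i then star (a i) * c i else 0 := by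
    intro j hj
    rw [smul_dotProduct, dotProduct_smul, ho i hi j hj]
    by_cases h : j = i
    · subst h; simp
    · simp [h, Ne.symm h]
  rw [Finset.sum_congr rfl this, Finset.sum_ite_eq' T i (fun _ => star (a i) * c i),
    if_pos hi]

lemma nsq_combo {z : ι → (Fin m → ℂ)} {T : Finset ι} (ho : OrthoOn z T) (a : ι → ℂ) :
    nsq (∑ i ∈ T, a i • z i) = ∑ i ∈ T, Complex.normSq (a i) := by
  rw [nsq, dot_combo ho]
  rw [Complex.re_sum]
  refine Finset.sum_congr rfl fun i _ => ?_
  rw [Complex.star_def, mul_comm, Complex.mul_conj, Complex.ofReal_re]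

lemma qf_combo {z : ι → (Fin m → ℂ)} {T : Finset ι} (ho : OrthoOn z T)
    {R : Matrix (Fin m) (Fin m) ℂ} {d : ι → ℝ}
    (hR : ∀ i ∈ T, R *ᵥ z i = (d i : ℂ) • z i) (a : ι → ℂ) :
    qf R (∑ i ∈ T, a i • z i) = ∑ i ∈ T, Complex.normSq (a i) * d i := by
  rw [qf, mulVec_finsum]
  have h1 : ∀ i ∈ T, R *ᵥ (a i • z i) = (a i * (d i : ℂ)) • z i := by
    intro i hi
    rw [mulVec_smul, hR i hi, smul_smul]
  rw [Finset.sum_congr rfl h1, dot_combo ho]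
  rw [Complex.re_sum]
  refine Finset.sum_congr rfl fun i _ => ?_
  have : star (a i) * (a i * (d i : ℂ)) = ((Complex.normSq (a i) * d i : ℝ) : ℂ) := by
    rw [Complex.star_def, ← mul_assoc, mul_comm ((starRingEnd ℂ) (a i)), Complex.mul_conj]
    push_cast; ring
  rw [this, Complex.ofReal_re]

lemma ortho_linearIndependent {z : ι → (Fin m → ℂ)} {T : Finset ι} (ho : OrthoOn z T) :
    LinearIndependent ℂ (fun i : T => z i) := by
  rw [Fintype.linearIndependent_iff]
  intro g hg j
  have h1 : star (z j) ⬝ᵥ (∑ i : T, g i • z (i : ι)) = g j := by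
    rw [dot_sum]
    have : ∀ i ∈ (Finset.univ : Finset T),
        star (z (j : ι)) ⬝ᵥ (g i • z (i : ι)) = if i = j then g j else 0 := by
      intro i _
      rw [dotProduct_smul, ho j j.2 i i.2]
      by_cases h : i = j
      · subst h; simp
      · have : (j : ι) ≠ (i : ι) := fun hc => h (Subtype.ext hc.symm)
        simp [h, this]
    rw [Finset.sum_congr rfl this, Finset.sum_ite_eq' Finset.univ j (fun _ => g j),
      if_pos (Finset.mem_univ j)]
  rw [hg] at h1
  simp at h1
  exact h1.symm

lemma finrank_span_ortho {z : ι → (Fin m → ℂ)} {T : Finset ι} (ho : OrthoOn z T) :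
    Module.finrank ℂ (Submodule.span ℂ (z '' (T : Set ι))) = T.card := by
  rw [image_coe_eq_range, finrank_span_eq_card (ortho_linearIndependent ho), Fintype.card_coe]

end sums

section sorted

variable {W : Matrix (Fin m) (Fin m) ℂ} (hW : W.IsHermitian)

/-- sorted (non-increasing) eigenvalues -/
noncomputable def sev : Fin m → ℝ :=
  fun i => hW.eigenvalues (Tuple.sort hW.eigenvalues i.rev)

/-- eigenvector family matching `sev` -/
noncomputable def sbasis : Fin m → (Fin m → ℂ) :=
  fun i => ⇑(hW.eigenvectorBasis (Tuple.sort hW.eigenvalues i.rev))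

lemma sev_antitone : Antitone (sev hW) := by
  intro i j hij
  have := Tuple.monotone_sort hW.eigenvalues (Fin.rev_le_rev.2 hij)
  exact this

lemma sbasis_eigen (i : Fin m) :
    W *ᵥ sbasis hW i = ((sev hW i : ℝ) : ℂ) • sbasis hW i := by
  have := hW.mulVec_eigenvectorBasis (Tuple.sort hW.eigenvalues i.rev)
  rw [sbasis, sev, this]
  funext j
  simp [Pi.smul_apply, Complex.real_smul]

lemma sbasis_ortho : OrthoOn (sbasis hW) (Finset.univ : Finset (Fin m)) := by
  intro i _ j _
  have horth := hW.eigenvectorBasis.orthonormal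
  have h1 := horth.1
  have h2 := horth.2
  by_cases h : i = j
  · subst h
    have := h1 (Tuple.sort hW.eigenvalues i.rev)
    rw [if_pos rfl]
    have hinner : (inner (𝕜 := ℂ) (hW.eigenvectorBasis (Tuple.sort hW.eigenvalues i.rev))
        (hW.eigenvectorBasis (Tuple.sort hW.eigenvalues i.rev))) =
        star (sbasis hW i) ⬝ᵥ sbasis hW i := by
      rw [EuclideanSpace.inner_eq_star_dotProduct, dotProduct_comm]
      rfl
    rw [← hinner, inner_self_eq_norm_sq_to_K, this]
    norm_num
  · have hne : Tuple.sort hW.eigenvalues i.rev ≠ Tuple.sort hW.eigenvalues j.rev := by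
      intro hc
      exact h (Fin.rev_injective ((Tuple.sort hW.eigenvalues).injective hc))
    have := h2 hne
    have hinner : (inner (𝕜 := ℂ) (hW.eigenvectorBasis (Tuple.sort hW.eigenvalues i.rev))
        (hW.eigenvectorBasis (Tuple.sort hW.eigenvalues j.rev))) =
        star (sbasis hW i) ⬝ᵥ sbasis hW j := by
      rw [EuclideanSpace.inner_eq_star_dotProduct, dotProduct_comm]
      rfl
    have h0 : star (sbasis hW i) ⬝ᵥ sbasis hW j = 0 := by rw [← hinner]; exact this
    rw [h0, if_neg h]

end sorted

section cf

variable {W : Matrix (Fin m) (Fin m) ℂ} (hW : W.IsHermitian)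

lemma sbasis_orthoOn (T : Finset (Fin m)) : OrthoOn (sbasis hW) T :=
  fun i _ j _ => sbasis_ortho hW i (Finset.mem_univ i) j (Finset.mem_univ j)

lemma qf_le_on_span {T : Finset (Fin m)} {c : ℝ} (hc : ∀ i ∈ T, sev hW i ≤ c)
    {x : Fin m → ℂ} (hx : x ∈ Submodule.span ℂ (sbasis hW '' (T : Set (Fin m)))) :
    qf W x ≤ c * nsq x := by
  obtain ⟨a, rfl⟩ := mem_span_rep hx
  rw [qf_combo (sbasis_orthoOn hW T) (fun i _ => sbasis_eigen hW i) a,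
    nsq_combo (sbasis_orthoOn hW T) a, Finset.mul_sum]
  refine Finset.sum_le_sum fun i hi => ?_
  rw [mul_comm c]
  exact mul_le_mul_of_nonneg_left (hc i hi) (Complex.normSq_nonneg _)

lemma qf_ge_on_span {T : Finset (Fin m)} {c : ℝ} (hc : ∀ i ∈ T, c ≤ sev hW i)
    {x : Fin m → ℂ} (hx : x ∈ Submodule.span ℂ (sbasis hW '' (T : Set (Fin m)))) :
    c * nsq x ≤ qf W x := by
  obtain ⟨a, rfl⟩ := mem_span_rep hx
  rw [qf_combo (sbasis_orthoOn hW T) (fun i _ => sbasis_eigen hW i) a,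
    nsq_combo (sbasis_orthoOn hW T) a, Finset.mul_sum]
  refine Finset.sum_le_sum fun i hi => ?_
  rw [mul_comm c]
  exact mul_le_mul_of_nonneg_left (hc i hi) (Complex.normSq_nonneg _)

lemma finrank_span_sbasis (T : Finset (Fin m)) :
    Module.finrank ℂ (Submodule.span ℂ (sbasis hW '' (T : Set (Fin m)))) = T.card :=
  finrank_span_ortho (sbasis_orthoOn hW T)

lemma exists_mem_both {S S' : Submodule ℂ (Fin m → ℂ)}
    (h : m < Module.finrank ℂ S + Module.finrank ℂ S') :
    ∃ x, x ∈ S ∧ x ∈ S' ∧ x ≠ 0 := by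
  have h1 := Submodule.finrank_sup_add_finrank_inf_eq S S'
  have h2 : Module.finrank ℂ ↥(S ⊔ S') ≤ m := by
    have := Submodule.finrank_le (S ⊔ S')
    rwa [Module.finrank_fintype_fun_eq_card, Fintype.card_fin] at this
  have h3 : 0 < Module.finrank ℂ ↥(S ⊓ S') := by omega
  have hbot : S ⊓ S' ≠ ⊥ := by
    intro hb; rw [hb, finrank_bot] at h3; omega
  obtain ⟨x, hx, h0⟩ := Submodule.exists_mem_ne_zero_of_ne_bot hbot
  exact ⟨x, (Submodule.mem_inf.mp hx).1, (Submodule.mem_inf.mp hx).2, h0⟩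

lemma cf_le {k : Fin m} {S : Submodule ℂ (Fin m → ℂ)} (hdim : (k : ℕ) + 1 ≤ Module.finrank ℂ S)
    {c : ℝ} (hbd : ∀ x ∈ S, c * nsq x ≤ qf W x) : c ≤ sev hW k := by
  have hcard : (Finset.Ici k).card = m - k := Fin.card_Ici k
  obtain ⟨x, hxS, hxT, hx0⟩ := exists_mem_both (S := S)
    (S' := Submodule.span ℂ (sbasis hW '' ((Finset.Ici k) : Set (Fin m)))) (by
      rw [finrank_span_sbasis, hcard]
      have := k.isLt
      omega)
  have h1 : qf W x ≤ sev hW k * nsq x :=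
    qf_le_on_span hW (fun i hi => sev_antitone hW (Finset.mem_Ici.mp hi)) hxT
  have h2 := hbd x hxS
  have h3 := nsq_pos hx0
  nlinarith

lemma cf_ge {k : Fin m} {S : Submodule ℂ (Fin m → ℂ)} (hdim : m - (k : ℕ) ≤ Module.finrank ℂ S)
    {c : ℝ} (hbd : ∀ x ∈ S, qf W x ≤ c * nsq x) : sev hW k ≤ c := by
  have hcard : (Finset.Iic k).card = (k : ℕ) + 1 := Fin.card_Iic k
  obtain ⟨x, hxS, hxT, hx0⟩ := exists_mem_both (S := S)
    (S' := Submodule.span ℂ (sbasis hW '' ((Finset.Iic k) : Set (Fin m)))) (by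
      rw [finrank_span_sbasis, hcard]
      have := k.isLt
      omega)
  have h1 : sev hW k * nsq x ≤ qf W x :=
    qf_ge_on_span hW (fun i hi => sev_antitone hW (Finset.mem_Iic.mp hi)) hxT
  have h2 := hbd x hxS
  have h3 := nsq_pos hx0
  nlinarith

end cf

section compare

variable {W W' N : Matrix (Fin m) (Fin m) ℂ}

lemma finrank_inf_add (S S' : Submodule ℂ (Fin m → ℂ)) :
    Module.finrank ℂ S + Module.finrank ℂ S'
      ≤ Module.finrank ℂ ↥(S ⊓ S') + m := by
  have h1 := Submodule.finrank_sup_add_finrank_inf_eq S S'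
  have h2 : Module.finrank ℂ ↥(S ⊔ S') ≤ m := by
    have := Submodule.finrank_le (S ⊔ S')
    rwa [Module.finrank_fintype_fun_eq_card, Fintype.card_fin] at this
  omega

/-- monotonicity with additive constant -/
lemma sev_mono_qf (hW : W.IsHermitian) (hW' : W'.IsHermitian) (c : ℝ)
    (h : ∀ x, qf W x ≤ qf W' x + c * nsq x) (k : Fin m) :
    sev hW k ≤ sev hW' k + c := by
  have hcard : (Finset.Iic k).card = (k : ℕ) + 1 := Fin.card_Iic k
  have := cf_le hW' (k := k)
    (S := Submodule.span ℂ (sbasis hW '' ((Finset.Iic k) : Set (Fin m))))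
    (c := sev hW k - c) (by rw [finrank_span_sbasis, hcard]) (fun x hx => by
      have h1 : sev hW k * nsq x ≤ qf W x :=
        qf_ge_on_span hW (fun i hi => sev_antitone hW (Finset.mem_Iic.mp hi)) hx
      have h2 := h x
      linarith)
  linarith

/-- adding a perturbation supported away from a large subspace shifts indices -/
lemma sev_add_perturb (hW : W.IsHermitian) (hWN : (W + N).IsHermitian)
    {j : ℕ} {Z : Submodule ℂ (Fin m → ℂ)} (hZ : m - j ≤ Module.finrank ℂ Z)
    (hqN : ∀ x ∈ Z, qf N x ≤ 0) {k l : Fin m} (hkl : (k : ℕ) + j ≤ (l : ℕ)) :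
    sev hWN l ≤ sev hW k := by
  have hcard : (Finset.Ici k).card = m - k := Fin.card_Ici k
  set S' := Submodule.span ℂ (sbasis hW '' ((Finset.Ici k) : Set (Fin m)))
  have hfr : m - ((l : ℕ)) ≤ Module.finrank ℂ ↥(Z ⊓ S') := by
    have h1 := finrank_inf_add Z S'
    rw [finrank_span_sbasis, hcard] at h1
    omega
  refine cf_ge hWN (k := l) (S := Z ⊓ S') hfr (fun x hx => ?_)
  obtain ⟨hxZ, hxS⟩ := Submodule.mem_inf.mp hx
  have h1 : qf W x ≤ sev hW k * nsq x :=
    qf_le_on_span hW (fun i hi => sev_antitone hW (Finset.mem_Ici.mp hi)) hxS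
  have h2 := hqN x hxZ
  rw [qf_add]
  linarith

/-- sum of sorted eigenvalues is the (real) trace -/
lemma sum_sev (hW : W.IsHermitian) : ∑ i, sev hW i = (Matrix.trace W).re := by
  have h1 : ∑ i, sev hW i = ∑ i, hW.eigenvalues i :=
    Equiv.sum_comp (Fin.revPerm.trans (Tuple.sort hW.eigenvalues)) hW.eigenvalues
  rw [h1]
  have h2 : Matrix.trace W = ∑ i, ((hW.eigenvalues i : ℝ) : ℂ) := by
    conv_lhs => rw [hW.spectral_theorem, Unitary.conjStarAlgAut_apply]
    rw [Matrix.trace_mul_cycle, Unitary.star_mul_self_of_mem (hW.eigenvectorUnitary).2,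
      Matrix.one_mul, Matrix.trace_diagonal]
    simp
  rw [h2, Complex.re_sum]
  simp

end compare

section cmb

variable {W : Matrix (Fin m) (Fin m) ℂ} (hW : W.IsHermitian)

/-- matrix with the same sorted eigenbasis as `W` and prescribed (sorted-indexed) eigenvalues -/
noncomputable def smb (G : Fin m → ℝ) : Matrix (Fin m) (Fin m) ℂ :=
  (hW.eigenvectorUnitary : Matrix (Fin m) (Fin m) ℂ)
    * diagonal (Complex.ofReal ∘ fun j => G (((Tuple.sort hW.eigenvalues).symm j).rev))
    * star (hW.eigenvectorUnitary : Matrix (Fin m) (Fin m) ℂ)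

lemma smb_add (G G' : Fin m → ℝ) : smb hW G + smb hW G' = smb hW (G + G') := by
  have hd : diagonal (Complex.ofReal ∘ fun j => G (((Tuple.sort hW.eigenvalues).symm j).rev))
      + diagonal (Complex.ofReal ∘ fun j => G' (((Tuple.sort hW.eigenvalues).symm j).rev))
      = diagonal (Complex.ofReal ∘ fun j => (G + G') (((Tuple.sort hW.eigenvalues).symm j).rev)) := by
    rw [diagonal_add]
    ext i j
    by_cases h : i = j
    · subst h
      simp [Matrix.diagonal_apply_eq, Function.comp]
    · simp [Matrix.diagonal_apply_ne _ h]
  rw [smb, smb, smb, ← Matrix.add_mul, ← Matrix.mul_add, hd]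

lemma smb_isHermitian (G : Fin m → ℝ) : (smb hW G).IsHermitian := by
  rw [smb]
  apply Matrix.isHermitian_mul_mul_conjTranspose
  show _ᴴ = _
  rw [diagonal_conjTranspose]
  have h1 : star (Complex.ofReal ∘ fun j => G (((Tuple.sort hW.eigenvalues).symm j).rev))
      = Complex.ofReal ∘ fun j => G (((Tuple.sort hW.eigenvalues).symm j).rev) := by
    funext j
    simp [Function.comp, Pi.star_apply, Complex.star_def, Complex.conj_ofReal]
  rw [h1]

lemma smb_eigen (G : Fin m → ℝ) (i : Fin m) :
    smb hW G *ᵥ sbasis hW i = ((G i : ℝ) : ℂ) • sbasis hW i := by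
  rw [smb, ← Matrix.mulVec_mulVec, ← Matrix.mulVec_mulVec, sbasis,
    hW.star_eigenvectorUnitary_mulVec, Matrix.diagonal_mulVec_single]
  have h1 : (Pi.single ((Tuple.sort hW.eigenvalues) i.rev)
      ((Complex.ofReal ∘ fun j => G (((Tuple.sort hW.eigenvalues).symm j).rev))
        ((Tuple.sort hW.eigenvalues) i.rev) * 1) : Fin m → ℂ)
      = ((G i : ℝ) : ℂ) • (Pi.single ((Tuple.sort hW.eigenvalues) i.rev) (1 : ℂ) : Fin m → ℂ) := by
    funext a
    by_cases h : a = (Tuple.sort hW.eigenvalues) i.rev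
    · subst h; simp
    · simp [Pi.single_apply, h]
  rw [h1, Matrix.mulVec_smul, hW.eigenvectorUnitary_mulVec]

lemma smb_sev : smb hW (sev hW) = W := by
  have h1 : (fun j => sev hW (((Tuple.sort hW.eigenvalues).symm j).rev)) = hW.eigenvalues := by
    funext j
    rw [sev]
    congr 1
    rw [Fin.rev_rev, Equiv.apply_symm_apply]
  rw [smb, h1]
  exact hW.spectral_theorem.symm

lemma trace_smb (G : Fin m → ℝ) : (Matrix.trace (smb hW G)).re = ∑ i, G i := by
  rw [smb, Matrix.trace_mul_cycle, Unitary.star_mul_self_of_mem (hW.eigenvectorUnitary).2,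
    Matrix.one_mul, Matrix.trace_diagonal]
  have h1 : ∑ j, (Complex.ofReal ∘ fun j => G (((Tuple.sort hW.eigenvalues).symm j).rev)) j
      = ((∑ j, G (((Tuple.sort hW.eigenvalues).symm j).rev) : ℝ) : ℂ) := by
    push_cast; rfl
  rw [h1, Complex.ofReal_re]
  exact Equiv.sum_comp (((Tuple.sort hW.eigenvalues).symm).trans Fin.revPerm) G

lemma span_sbasis_univ :
    Submodule.span ℂ (sbasis hW '' ((Finset.univ : Finset (Fin m)) : Set (Fin m))) = ⊤ := by
  apply Submodule.eq_top_of_finrank_eq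
  rw [finrank_span_sbasis, Module.finrank_fintype_fun_eq_card, Fintype.card_fin, Finset.card_univ,
    Fintype.card_fin]

lemma qf_smb_nonneg {G : Fin m → ℝ} (hG : ∀ i, 0 ≤ G i) (x : Fin m → ℂ) :
    0 ≤ qf (smb hW G) x := by
  have hx : x ∈ Submodule.span ℂ (sbasis hW '' ((Finset.univ : Finset (Fin m)) : Set (Fin m))) := by
    rw [span_sbasis_univ]; trivial
  obtain ⟨a, rfl⟩ := mem_span_rep hx
  rw [qf_combo (sbasis_orthoOn hW Finset.univ) (fun i _ => smb_eigen hW G i) a]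
  exact Finset.sum_nonneg fun i _ => mul_nonneg (Complex.normSq_nonneg _) (hG i)

lemma qf_smb_nonpos_on {G : Fin m → ℝ} {T : Finset (Fin m)} (hG : ∀ i ∈ T, G i ≤ 0)
    {x : Fin m → ℂ} (hx : x ∈ Submodule.span ℂ (sbasis hW '' (T : Set (Fin m)))) :
    qf (smb hW G) x ≤ 0 := by
  obtain ⟨a, rfl⟩ := mem_span_rep hx
  rw [qf_combo (sbasis_orthoOn hW T) (fun i _ => smb_eigen hW G i) a]
  exact Finset.sum_nonpos fun i hi =>
    mul_nonpos_of_nonneg_of_nonpos (Complex.normSq_nonneg _) (hG i hi)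

end cmb

section mainlemma

variable {W : Matrix (Fin m) (Fin m) ℂ}

lemma smb_const (hW : W.IsHermitian) (c : ℝ) :
    smb hW (fun _ => c) = (c : ℂ) • (1 : Matrix (Fin m) (Fin m) ℂ) := by
  rw [smb]
  have h1 : diagonal (Complex.ofReal ∘ fun j =>
        (fun _ => c) (((Tuple.sort hW.eigenvalues).symm j).rev))
      = (c : ℂ) • (1 : Matrix (Fin m) (Fin m) ℂ) := by
    ext i j
    by_cases h : i = j
    · subst h; simp
    · simp [Matrix.diagonal_apply_ne _ h, Matrix.one_apply_ne h]
  rw [h1, mul_smul_comm, smul_mul_assoc, Matrix.mul_one,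
    Unitary.mul_star_self_of_mem (hW.eigenvectorUnitary).2]

lemma sev_congr {W' : Matrix (Fin m) (Fin m) ℂ} (hW : W.IsHermitian) (hW' : W'.IsHermitian)
    (h : W = W') (i : Fin m) : sev hW i = sev hW' i := by
  subst h; rfl

/-- 1-based ℕ-indexed sorted eigenvalues -/
noncomputable def nevs (hW : W.IsHermitian) (k : ℕ) : ℝ :=
  if h : k - 1 < m then sev hW ⟨k - 1, h⟩ else 0

lemma nevs_congr {W' : Matrix (Fin m) (Fin m) ℂ} (hW : W.IsHermitian) (hW' : W'.IsHermitian)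
    (h : W = W') (k : ℕ) : nevs hW k = nevs hW' k := by
  subst h; rfl

lemma nevs_eq (hW : W.IsHermitian) {k : ℕ} (h : k - 1 < m) :
    nevs hW k = sev hW ⟨k - 1, h⟩ := dif_pos h

lemma main_ineq (X Y : Matrix (Fin m) (Fin m) ℂ) (hX : X.IsHermitian) (hY : Y.IsHermitian)
    (hXY : (X + Y).IsHermitian) (b : ℕ) (hb : 1 ≤ b) (K : Finset ℕ) (p q : ℕ → ℕ)
    (hpq : ∀ k ∈ K, 1 ≤ p k ∧ p k + b ≤ q k + 1 ∧ q k ≤ m)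
    (hpinj : Set.InjOn p K)
    (hbr : b + K.card - 1 ≤ m) :
    ∑ k ∈ K, (nevs hXY (q k) - nevs hX (p k))
      ≤ ∑ i ∈ Finset.Icc b (b + K.card - 1), nevs hY i := by
  rcases K.eq_empty_or_nonempty with hK | hK
  · subst hK
    rw [Finset.sum_empty, Finset.card_empty, Finset.Icc_eq_empty (by omega), Finset.sum_empty]
  have hr1 : 1 ≤ K.card := Finset.card_pos.2 hK
  set r := K.card with hrdef
  have hm1 : b + r - 2 < m := by omega
  have hm0 : 0 < m := by omega
  set ν : ℝ := sev hY ⟨b + r - 2, hm1⟩ with hν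
  set Gpos : Fin m → ℝ := fun i => max (sev hY i - ν) 0 with hGpos
  set G1 : Fin m → ℝ := fun i => if (i : ℕ) + 1 < b then Gpos i else 0 with hG1
  set G2 : Fin m → ℝ := fun i => if (i : ℕ) + 1 < b then 0 else Gpos i with hG2
  set P := smb hY Gpos with hPdef
  set P1 := smb hY G1 with hP1def
  set P2 := smb hY G2 with hP2def
  have hG12 : G1 + G2 = Gpos := by
    funext i
    by_cases h : (i : ℕ) + 1 < b <;> simp [hG1, hG2, h]
  have hP12 : P1 + P2 = P := by rw [hP1def, hP2def, hPdef, smb_add, hG12]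
  have hXP : (X + P).IsHermitian := hX.add (smb_isHermitian hY Gpos)
  have hXP2 : (X + P2).IsHermitian := hX.add (smb_isHermitian hY G2)
  have hXP2P1 : (X + P2 + P1).IsHermitian := hXP2.add (smb_isHermitian hY G1)
  -- step 2 : sev (X+Y) i ≤ sev (X+P) i + ν
  have hf2 : ∀ i : Fin m, sev hXY i ≤ sev hXP i + ν := by
    refine sev_mono_qf hXY hXP ν (fun x => ?_)
    have hid' : smb hY (fun i => Gpos i + ν - sev hY i) + smb hY (sev hY)
        = P + smb hY (fun _ => ν) := by
      have harg : (fun i => Gpos i + ν - sev hY i) + sev hY = Gpos + fun _ => ν := by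
        funext i
        show Gpos i + ν - sev hY i + sev hY i = Gpos i + ν
        ring
      rw [smb_add, hPdef, smb_add, harg]
    rw [smb_sev hY] at hid'
    have hDnn : 0 ≤ qf (smb hY (fun i => Gpos i + ν - sev hY i)) x :=
      qf_smb_nonneg hY (fun i => by
        simp only [hGpos]
        rcases le_total (sev hY i) ν with h | h
        · rw [max_eq_right (by linarith)]; linarith
        · rw [max_eq_left (by linarith)]; linarith) x
    have h1 := congrArg (fun M => qf M x) hid'
    rw [qf_add, qf_add] at h1
    have h2 : qf (smb hY (fun _ => ν)) x = ν * nsq x := by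
      rw [smb_const hY ν, qf_smul_one]
    rw [h2] at h1
    have h3 : qf (X + Y) x = qf X x + qf Y x := qf_add X Y x
    have h4 : qf (X + P) x = qf X x + qf P x := qf_add X P x
    linarith
  -- step 4 ingredients : subspace killing P1
  have hbm : b - 1 < m := by omega
  set Z := Submodule.span ℂ (sbasis hY '' ((Finset.Ici (⟨b - 1, hbm⟩ : Fin m)) : Set (Fin m)))
    with hZdef
  have hZrank : m - (b - 1) ≤ Module.finrank ℂ Z := by
    rw [hZdef, finrank_span_sbasis, Fin.card_Ici]
  have hZkill : ∀ x ∈ Z, qf P1 x ≤ 0 := by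
    intro x hx
    refine qf_smb_nonpos_on hY (fun i hi => ?_) hx
    have hle : b - 1 ≤ (i : ℕ) := Fin.le_def.mp (Finset.mem_Ici.mp hi)
    simp only [hG1]
    rw [if_neg (by omega)]
  -- nonnegativity of gaps
  have hnn : ∀ i : Fin m, sev hX i ≤ sev hXP2 i := by
    intro i
    have := sev_mono_qf hX hXP2 0 (fun x => by
      have h1 : qf (X + P2) x = qf X x + qf P2 x := qf_add X P2 x
      have h2 : 0 ≤ qf P2 x := qf_smb_nonneg hY (fun i => by
        simp only [hG2]
        by_cases h : (i : ℕ) + 1 < b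
        · rw [if_pos h]
        · rw [if_neg h]; exact le_max_right _ _) x
      linarith) i
    linarith
  set idxf : ℕ → Fin m := fun k => ⟨(p k - 1) % m, Nat.mod_lt _ hm0⟩ with hidxf
  -- the per-k chain
  have hsum1 : ∑ k ∈ K, (nevs hXY (q k) - nevs hX (p k))
      ≤ ∑ k ∈ K, ((sev hXP2 (idxf k) - sev hX (idxf k)) + ν) := by
    refine Finset.sum_le_sum (fun k hk => ?_)
    obtain ⟨hk1, hk2, hk3⟩ := hpq k hk
    have hqm : q k - 1 < m := by omega
    have hpm : p k - 1 < m := by omega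
    have hpbm : p k - 1 + (b - 1) < m := by omega
    have hmod : (p k - 1) % m = p k - 1 := Nat.mod_eq_of_lt hpm
    have hidx : idxf k = ⟨p k - 1, hpm⟩ := by
      simp only [hidxf]
      exact Fin.ext (by simp [hmod])
    rw [nevs_eq hXY hqm, nevs_eq hX hpm, hidx]
    have c1 : sev hXY ⟨q k - 1, hqm⟩ ≤ sev hXP ⟨q k - 1, hqm⟩ + ν := hf2 _
    have c2 : sev hXP ⟨q k - 1, hqm⟩ ≤ sev hXP ⟨p k - 1 + (b - 1), hpbm⟩ :=
      sev_antitone hXP (Fin.mk_le_mk.mpr (by omega))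
    have c3 : sev hXP ⟨p k - 1 + (b - 1), hpbm⟩ ≤ sev hXP2 ⟨p k - 1, hpm⟩ := by
      have c4 : sev hXP2P1 ⟨p k - 1 + (b - 1), hpbm⟩ ≤ sev hXP2 ⟨p k - 1, hpm⟩ :=
        sev_add_perturb hXP2 hXP2P1 (j := b - 1) (Z := Z) (by omega) hZkill le_rfl
      have c5 : sev hXP ⟨p k - 1 + (b - 1), hpbm⟩ = sev hXP2P1 ⟨p k - 1 + (b - 1), hpbm⟩ :=
        sev_congr hXP hXP2P1 (by rw [← hP12]; abel) _
      linarith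
    linarith
  -- sum over K of gaps ≤ sum over univ
  set F : Fin m → ℝ := fun i => sev hXP2 i - sev hX i with hF
  have hFnn : ∀ i, 0 ≤ F i := fun i => by simp only [hF]; linarith [hnn i]
  have hinj : Set.InjOn idxf K := by
    intro a ha b' hb' hab
    obtain ⟨ha1, ha2, ha3⟩ := hpq a ha
    obtain ⟨hb1, hb2, hb3⟩ := hpq b' hb'
    have hpa : p a - 1 < m := by omega
    have hpb : p b' - 1 < m := by omega
    apply hpinj ha hb'
    have := congrArg (Fin.val) hab
    simp only [hidxf, Nat.mod_eq_of_lt hpa, Nat.mod_eq_of_lt hpb] at this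
    omega
  have hsum2 : ∑ k ∈ K, F (idxf k) ≤ ∑ i : Fin m, F i := by
    rw [← Finset.sum_image (f := F) (g := idxf) (fun a ha b' hb' h => hinj ha hb' h)]
    exact Finset.sum_le_sum_of_subset_of_nonneg (Finset.subset_univ _)
      (fun i _ _ => hFnn i)
  -- trace computation
  have htrace : ∑ i : Fin m, F i = (Matrix.trace P2).re := by
    simp only [hF]
    rw [Finset.sum_sub_distrib, sum_sev hXP2, sum_sev hX, Matrix.trace_add, Complex.add_re]
    ring
  have hG2sum : (Matrix.trace P2).re = ∑ i ∈ Finset.Icc b (b + r - 1), (nevs hY i - ν) := by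
    rw [hP2def, trace_smb]
    set g : ℕ → ℝ := fun j => if h : j < m then G2 ⟨j, h⟩ else 0 with hg
    have e1 : ∑ i : Fin m, G2 i = ∑ j ∈ Finset.range m, g j := by
      rw [Finset.sum_range fun j => g j]
      refine Finset.sum_congr rfl (fun i _ => ?_)
      simp only [hg]
      rw [dif_pos i.isLt]
    have e2 : ∀ j ∈ Finset.range m, j ∉ Finset.Icc (b - 1) (b + r - 2) → g j = 0 := by
      intro j hj hnotin
      rw [Finset.mem_range] at hj
      rw [Finset.mem_Icc] at hnotin
      push_neg at hnotin
      simp only [hg]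
      rw [dif_pos hj]
      simp only [hG2]
      by_cases hc : j + 1 < b
      · rw [if_pos hc]
      · rw [if_neg hc]
        have hj2 : b + r - 2 < j := by omega
        have hsle : sev hY ⟨j, hj⟩ ≤ ν := by
          rw [hν]
          exact sev_antitone hY (Fin.mk_le_mk.mpr (by omega))
        simp only [hGpos]
        rw [max_eq_right (by linarith)]
    have e3 : ∀ j ∈ Finset.Icc (b - 1) (b + r - 2), g j = nevs hY (j + 1) - ν := by
      intro j hj
      rw [Finset.mem_Icc] at hj
      have hjm : j < m := by omega
      simp only [hg]
      rw [dif_pos hjm]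
      simp only [hG2]
      rw [if_neg (by omega)]
      have hsge : ν ≤ sev hY ⟨j, hjm⟩ := by
        rw [hν]
        exact sev_antitone hY (Fin.mk_le_mk.mpr (by omega))
      simp only [hGpos]
      rw [max_eq_left (by linarith), nevs_eq hY (by omega : j + 1 - 1 < m)]
      have hfin : (⟨j + 1 - 1, by omega⟩ : Fin m) = ⟨j, hjm⟩ := Fin.mk_eq_mk.mpr (by omega)
      rw [hfin]
    have e4 : ∑ j ∈ Finset.range m, g j = ∑ j ∈ Finset.Icc (b - 1) (b + r - 2), g j := by
      refine (Finset.sum_subset (fun j hj => Finset.mem_range.2 ?_) e2).symm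
      rw [Finset.mem_Icc] at hj
      omega
    have e5 : ∑ j ∈ Finset.Icc (b - 1) (b + r - 2), (nevs hY (j + 1) - ν)
        = ∑ i ∈ Finset.Icc b (b + r - 1), (nevs hY i - ν) := by
      have hmap : Finset.Icc b (b + r - 1)
          = (Finset.Icc (b - 1) (b + r - 2)).map (addRightEmbedding 1) := by
        rw [Finset.map_add_right_Icc]
        congr 1 <;> omega
      rw [hmap, Finset.sum_map]
      refine Finset.sum_congr rfl (fun j _ => ?_)
      simp [addRightEmbedding]
    rw [e1, e4, Finset.sum_congr rfl e3, e5]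
  -- put it together
  have hcard : (Finset.Icc b (b + r - 1)).card = r := by
    rw [Nat.card_Icc]
    omega
  have final1 : ∑ k ∈ K, ((sev hXP2 (idxf k) - sev hX (idxf k)) + ν)
      = (∑ k ∈ K, F (idxf k)) + r * ν := by
    rw [Finset.sum_add_distrib, Finset.sum_const, hrdef]
    simp only [hF]
    rw [nsmul_eq_mul]
  have final2 : ∑ i ∈ Finset.Icc b (b + r - 1), (nevs hY i - ν)
      = (∑ i ∈ Finset.Icc b (b + r - 1), nevs hY i) - r * ν := by
    rw [Finset.sum_sub_distrib, Finset.sum_const, hcard, nsmul_eq_mul]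
  calc ∑ k ∈ K, (nevs hXY (q k) - nevs hX (p k))
      ≤ ∑ k ∈ K, ((sev hXP2 (idxf k) - sev hX (idxf k)) + ν) := hsum1
    _ = (∑ k ∈ K, F (idxf k)) + r * ν := final1
    _ ≤ (∑ i : Fin m, F i) + r * ν := by linarith [hsum2]
    _ = (Matrix.trace P2).re + r * ν := by rw [htrace]
    _ = (∑ i ∈ Finset.Icc b (b + r - 1), nevs hY i) := by rw [hG2sum, final2]; ring

end mainlemma

section dilation

variable {n : ℕ}

/-- vector gluing along `finSumFinEquiv` -/
noncomputable def glue (u v : Fin n → ℂ) : Fin (n + n) → ℂ :=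
  fun i => Sum.elim u v (finSumFinEquiv.symm i)

/-- Hermitian dilation -/
noncomputable def dil (M : Matrix (Fin n) (Fin n) ℂ) :
    Matrix (Fin (n + n)) (Fin (n + n)) ℂ :=
  (fromBlocks 0 M Mᴴ 0).submatrix finSumFinEquiv.symm finSumFinEquiv.symm

lemma glue_comp_fse (u v : Fin n → ℂ) :
    (glue u v) ∘ (finSumFinEquiv : Fin n ⊕ Fin n ≃ Fin (n + n)) = Sum.elim u v := by
  funext s
  simp [glue]

lemma dil_isHermitian (M : Matrix (Fin n) (Fin n) ℂ) : (dil M).IsHermitian := by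
  show _ᴴ = _
  rw [dil, conjTranspose_submatrix, fromBlocks_conjTranspose]
  congr 1
  simp

lemma dil_add (A B : Matrix (Fin n) (Fin n) ℂ) : dil (A + B) = dil A + dil B := by
  have h1 : (fromBlocks 0 (A + B) (A + B)ᴴ 0 : Matrix (Fin n ⊕ Fin n) (Fin n ⊕ Fin n) ℂ)
      = fromBlocks 0 A Aᴴ 0 + fromBlocks 0 B Bᴴ 0 := by
    rw [fromBlocks_add]
    simp [conjTranspose_add]
  rw [dil, dil, dil, h1, submatrix_add]
  rfl

lemma dil_mulVec (M : Matrix (Fin n) (Fin n) ℂ) (u v : Fin n → ℂ) :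
    dil M *ᵥ glue u v = glue (M *ᵥ v) (Mᴴ *ᵥ u) := by
  rw [dil, submatrix_mulVec_equiv, Equiv.symm_symm, glue_comp_fse, fromBlocks_mulVec]
  funext i
  simp only [glue, Function.comp, Sum.elim_comp_inl, Sum.elim_comp_inr, Matrix.zero_mulVec,
    zero_add, add_zero]

lemma star_glue (u v : Fin n → ℂ) : star (glue u v) = glue (star u) (star v) := by
  funext i
  rcases h : finSumFinEquiv.symm i with a | a <;> simp [glue, h]

lemma glue_dot (a b c d : Fin n → ℂ) : glue a b ⬝ᵥ glue c d = a ⬝ᵥ c + b ⬝ᵥ d := by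
  have h1 : glue a b ⬝ᵥ glue c d
      = ∑ s : Fin n ⊕ Fin n, (Sum.elim a b s) * (Sum.elim c d s) := by
    rw [dotProduct, ← Equiv.sum_comp (finSumFinEquiv : Fin n ⊕ Fin n ≃ Fin (n+n))
      (fun i => glue a b i * glue c d i)]
    refine Finset.sum_congr rfl fun s _ => ?_
    simp [glue]
  rw [h1]
  exact sumElim_dotProduct_sumElim _ _ _ _

lemma star_glue_dot (a b c d : Fin n → ℂ) :
    star (glue a b) ⬝ᵥ glue c d = star a ⬝ᵥ c + star b ⬝ᵥ d := by
  rw [star_glue, glue_dot]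

lemma nsq_glue (a b : Fin n → ℂ) : nsq (glue a b) = nsq a + nsq b := by
  unfold nsq
  rw [star_glue_dot, Complex.add_re]

lemma glue_smul (c : ℂ) (a b : Fin n → ℂ) : glue (c • a) (c • b) = c • glue a b := by
  funext i
  rcases h : finSumFinEquiv.symm i with s | s <;> simp [glue, h]

/-- glue as a linear map in the first argument -/
noncomputable def lglue1 : (Fin n → ℂ) →ₗ[ℂ] (Fin (n + n) → ℂ) where
  toFun u := glue u 0
  map_add' a b := by
    funext i
    rcases h : finSumFinEquiv.symm i with s | s <;> simp [glue, h]
  map_smul' c a := by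
    funext i
    rcases h : finSumFinEquiv.symm i with s | s <;> simp [glue, h]

/-- glue as a linear map in the second argument -/
noncomputable def lglue2 : (Fin n → ℂ) →ₗ[ℂ] (Fin (n + n) → ℂ) where
  toFun v := glue 0 v
  map_add' a b := by
    funext i
    rcases h : finSumFinEquiv.symm i with s | s <;> simp [glue, h]
  map_smul' c a := by
    funext i
    rcases h : finSumFinEquiv.symm i with s | s <;> simp [glue, h]

lemma lglue_split (u v : Fin n → ℂ) : glue u v = lglue1 u + lglue2 v := by
  funext i
  rcases h : finSumFinEquiv.symm i with s | s <;> simp [glue, lglue1, lglue2, h]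

lemma qf_dil (M : Matrix (Fin n) (Fin n) ℂ) (u v : Fin n → ℂ) :
    qf (dil M) (glue u v) = 2 * (star u ⬝ᵥ (M *ᵥ v)).re := by
  rw [qf, dil_mulVec, star_glue_dot]
  have h2 : star v ⬝ᵥ (Mᴴ *ᵥ u) = star (star u ⬝ᵥ (Mᴴᴴ *ᵥ v)) := dot_adj Mᴴ v u
  rw [conjTranspose_conjTranspose] at h2
  rw [h2, Complex.add_re]
  have : (star (star u ⬝ᵥ M *ᵥ v)).re = (star u ⬝ᵥ M *ᵥ v).re := Complex.conj_re _
  rw [this]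
  ring

lemma nsq_smul_real (c : ℝ) (u : Fin n → ℂ) : nsq ((c : ℂ) • u) = c ^ 2 * nsq u := by
  unfold nsq
  rw [star_smul, smul_dotProduct, dotProduct_smul]
  have : star (c : ℂ) • ((c : ℂ) • (star u ⬝ᵥ u)) = ((c ^ 2 : ℝ) : ℂ) * (star u ⬝ᵥ u) := by
    rw [smul_eq_mul, smul_eq_mul, ← mul_assoc]
    congr 1
    rw [Complex.star_def, Complex.conj_ofReal]
    push_cast
    ring
  rw [this, Complex.re_ofReal_mul]

lemma nsq_sub_expand (c : ℝ) (u y : Fin n → ℂ) :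
    nsq ((c : ℂ) • u - y) = c ^ 2 * nsq u - 2 * (c * (star u ⬝ᵥ y).re) + nsq y := by
  unfold nsq
  rw [star_sub, sub_dotProduct, dotProduct_sub, dotProduct_sub]
  have h1 : star ((c : ℂ) • u) ⬝ᵥ y = (c : ℂ) * (star u ⬝ᵥ y) := by
    rw [star_smul, smul_dotProduct, smul_eq_mul]
    congr 1
    rw [Complex.star_def, Complex.conj_ofReal]
  have h2 : star y ⬝ᵥ ((c : ℂ) • u) = star ((c : ℂ) * (star u ⬝ᵥ y)) := by
    rw [star_dot_comm, ← h1]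
  have hA : star ((c : ℂ) • u) ⬝ᵥ ((c : ℂ) • u) = ((c ^ 2 : ℝ) : ℂ) * (star u ⬝ᵥ u) := by
    rw [star_smul, smul_dotProduct, dotProduct_smul, smul_eq_mul, smul_eq_mul, ← mul_assoc]
    congr 1
    rw [Complex.star_def, Complex.conj_ofReal]
    push_cast
    ring
  rw [hA, h1, h2]
  simp only [Complex.sub_re, Complex.star_def, Complex.conj_re, Complex.re_ofReal_mul]
  ring

lemma amgm {c : ℝ} (hc : 0 ≤ c) (u y w : Fin n → ℂ) (hy : nsq y ≤ c ^ 2 * nsq w) :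
    2 * (star u ⬝ᵥ y).re ≤ c * nsq u + c * nsq w := by
  rcases eq_or_lt_of_le hc with h0 | hpos
  · have hy0 : y = 0 := eq_zero_of_nsq_nonpos (by
      rw [← h0] at hy
      simpa using hy)
    rw [hy0, dotProduct_zero]
    rw [← h0]
    simp
  · have key : 0 ≤ nsq ((c : ℂ) • u - y) := nsq_nonneg _
    rw [nsq_sub_expand] at key
    nlinarith [nsq_nonneg u, nsq_nonneg w]

end dilation

section dilsing

open scoped ComplexOrder

variable {n : ℕ} (M : Matrix (Fin n) (Fin n) ℂ)

/-- singular values (0-based, antitone) -/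
noncomputable def sgs : Fin n → ℝ := fun i =>
  Real.sqrt (sev (isHermitian_conjTranspose_mul_self M) i)

lemma sev_MM_nonneg (i : Fin n) : 0 ≤ sev (isHermitian_conjTranspose_mul_self M) i :=
  (Matrix.posSemidef_conjTranspose_mul_self M).eigenvalues_nonneg _

lemma sgs_nonneg (i : Fin n) : 0 ≤ sgs M i := Real.sqrt_nonneg _

lemma sq_sgs (i : Fin n) : sgs M i ^ 2 = sev (isHermitian_conjTranspose_mul_self M) i :=
  Real.sq_sqrt (sev_MM_nonneg M i)

lemma sgs_antitone : Antitone (sgs M) := fun i j h =>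
  Real.sqrt_le_sqrt (sev_antitone _ h)

lemma star_mulVec_dot (N : Matrix (Fin n) (Fin n) ℂ) (a y : Fin n → ℂ) :
    star (N *ᵥ a) ⬝ᵥ y = star a ⬝ᵥ (Nᴴ *ᵥ y) := by
  rw [star_mulVec, dotProduct_mulVec]

/-- right singular vectors -/
noncomputable def rsv : Fin n → (Fin n → ℂ) := sbasis (isHermitian_conjTranspose_mul_self M)

/-- left singular vectors -/
noncomputable def lsv : Fin n → (Fin n → ℂ) := fun i =>
  (((sgs M i)⁻¹ : ℝ) : ℂ) • (M *ᵥ rsv M i)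

lemma rsv_dot (i j : Fin n) :
    star (rsv M i) ⬝ᵥ rsv M j = if i = j then 1 else 0 :=
  sbasis_ortho _ i (Finset.mem_univ i) j (Finset.mem_univ j)

lemma nsq_rsv (i : Fin n) : nsq (rsv M i) = 1 := by
  unfold nsq
  rw [rsv_dot, if_pos rfl, Complex.one_re]

lemma mulVec_dot_eigen (i j : Fin n) :
    star (M *ᵥ rsv M i) ⬝ᵥ (M *ᵥ rsv M j)
      = if i = j then ((sev (isHermitian_conjTranspose_mul_self M) j : ℝ) : ℂ) else 0 := by
  rw [star_mulVec_dot, Matrix.mulVec_mulVec]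
  simp only [rsv]
  rw [sbasis_eigen, dotProduct_smul, sbasis_ortho _ i (Finset.mem_univ i) j (Finset.mem_univ j)]
  by_cases h : i = j
  · subst h; simp
  · simp [h]

lemma nsq_Mv (i : Fin n) :
    nsq (M *ᵥ rsv M i) = sev (isHermitian_conjTranspose_mul_self M) i := by
  unfold nsq
  rw [mulVec_dot_eigen, if_pos rfl, Complex.ofReal_re]

lemma Mv_zero_of_sgs_zero (i : Fin n) (h : sgs M i = 0) : M *ᵥ rsv M i = 0 :=
  eq_zero_of_nsq_nonpos (by
    rw [nsq_Mv, ← sq_sgs, h]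
    norm_num)

lemma Mv_eq (i : Fin n) : M *ᵥ rsv M i = ((sgs M i : ℝ) : ℂ) • lsv M i := by
  by_cases h : sgs M i = 0
  · rw [Mv_zero_of_sgs_zero M i h, h]
    simp
  · simp only [lsv]
    rw [smul_smul, ← Complex.ofReal_mul, mul_inv_cancel₀ h]
    simp

lemma MHu_eq (i : Fin n) : Mᴴ *ᵥ lsv M i = ((sgs M i : ℝ) : ℂ) • rsv M i := by
  simp only [lsv]
  rw [Matrix.mulVec_smul, Matrix.mulVec_mulVec]
  simp only [rsv]
  rw [sbasis_eigen, smul_smul, ← Complex.ofReal_mul]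
  by_cases h : sgs M i = 0
  · have h0 : sev (isHermitian_conjTranspose_mul_self M) i = 0 := by
      rw [← sq_sgs, h]; norm_num
    rw [h0, h]
    norm_num
  · have hc : (sgs M i)⁻¹ * sev (isHermitian_conjTranspose_mul_self M) i = sgs M i := by
      rw [← sq_sgs]
      field_simp
    rw [hc]

lemma lsv_dot (i j : Fin n) : star (lsv M i) ⬝ᵥ lsv M j
    = if i = j then (if sgs M i = 0 then 0 else 1) else 0 := by
  simp only [lsv]
  rw [star_smul, smul_dotProduct, dotProduct_smul, mulVec_dot_eigen]
  by_cases h : i = j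
  · subst h
    rw [if_pos rfl, if_pos rfl]
    by_cases h0 : sgs M i = 0
    · have hsev : sev (isHermitian_conjTranspose_mul_self M) i = 0 := by
        rw [← sq_sgs, h0]; norm_num
      rw [if_pos h0, hsev]
      simp
    · rw [if_neg h0]
      have hsev : sev (isHermitian_conjTranspose_mul_self M) i = sgs M i * sgs M i := by
        rw [← sq_sgs]; ring
      rw [hsev]
      simp only [smul_eq_mul, Complex.star_def, Complex.conj_ofReal]
      norm_cast
      field_simp
  · rw [if_neg h, if_neg h]
    simp

/-- normalization constants -/
noncomputable def zc : Fin n → ℝ := fun i => if sgs M i = 0 then 1 else (Real.sqrt 2)⁻¹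

/-- eigenvectors of the dilation for nonnegative eigenvalues -/
noncomputable def zv : Fin n → (Fin (n + n) → ℂ) := fun i =>
  ((zc M i : ℝ) : ℂ) • glue (lsv M i) (rsv M i)

lemma zv_ortho : OrthoOn (zv M) (Finset.univ : Finset (Fin n)) := by
  intro i _ j _
  simp only [zv]
  rw [star_smul, smul_dotProduct, dotProduct_smul, star_glue_dot, lsv_dot, rsv_dot]
  simp only [smul_eq_mul, Complex.star_def, Complex.conj_ofReal]
  by_cases h : i = j
  · subst h
    simp only [if_pos rfl]
    by_cases h0 : sgs M i = 0
    · simp [zc, h0]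
    · have h2 : Real.sqrt 2 * Real.sqrt 2 = 2 := Real.mul_self_sqrt (by norm_num)
      have h3 : Real.sqrt 2 ≠ 0 := by positivity
      simp only [zc, if_neg h0, if_pos rfl, if_true]
      norm_cast
      field_simp
      rw [Real.sq_sqrt (by norm_num)]
      norm_num
  · simp [h]

lemma zv_eigen (i : Fin n) : dil M *ᵥ zv M i = ((sgs M i : ℝ) : ℂ) • zv M i := by
  simp only [zv]
  rw [Matrix.mulVec_smul, dil_mulVec, Mv_eq, MHu_eq, glue_smul, smul_comm]

lemma nsq_mulVec (w : Fin n → ℂ) : nsq (M *ᵥ w) = qf (Mᴴ * M) w := by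
  unfold nsq qf
  rw [star_mulVec_dot, Matrix.mulVec_mulVec]

lemma sev_dil_ge (k : Fin n) (hk2 : (k : ℕ) < n + n) :
    sgs M k ≤ sev (dil_isHermitian M) ⟨(k : ℕ), hk2⟩ := by
  have hoT : OrthoOn (zv M) (Finset.Iic k) := fun i _ j _ =>
    zv_ortho M i (Finset.mem_univ i) j (Finset.mem_univ j)
  refine cf_le (dil_isHermitian M)
    (S := Submodule.span ℂ (zv M '' ((Finset.Iic k) : Set (Fin n)))) ?_ ?_
  · rw [finrank_span_ortho hoT, Fin.card_Iic]
  · intro x hx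
    obtain ⟨a, rfl⟩ := mem_span_rep hx
    rw [qf_combo hoT (fun i _ => zv_eigen M i) a, nsq_combo hoT a, Finset.mul_sum]
    refine Finset.sum_le_sum fun i hi => ?_
    rw [mul_comm (sgs M k)]
    exact mul_le_mul_of_nonneg_left (sgs_antitone M (Finset.mem_Iic.mp hi))
      (Complex.normSq_nonneg _)

lemma sev_dil_le (k : Fin n) (hk2 : (k : ℕ) < n + n) :
    sev (dil_isHermitian M) ⟨(k : ℕ), hk2⟩ ≤ sgs M k := by
  classical
  set w : (Fin n ⊕ Fin n) → (Fin (n + n) → ℂ) :=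
    Sum.elim (fun i => glue (Pi.single i 1) 0) (fun j => glue 0 (rsv M j)) with hw
  set T : Finset (Fin n ⊕ Fin n) :=
    (Finset.univ : Finset (Fin n)).disjSum (Finset.Ici k) with hT
  have hsingle : ∀ i j : Fin n,
      star (Pi.single i (1:ℂ) : Fin n → ℂ) ⬝ᵥ (Pi.single j (1:ℂ) : Fin n → ℂ)
        = if i = j then 1 else 0 := by
    intro i j
    have hst : star (Pi.single i (1:ℂ) : Fin n → ℂ) = Pi.single i (1:ℂ) := by
      funext a
      by_cases h : a = i
      · subst h; simp
      · simp [Pi.single_apply, h]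
    rw [hst, dotProduct_single]
    by_cases h : i = j
    · subst h; simp
    · simp [Pi.single_apply, h, Ne.symm h]
  have hoT : OrthoOn w T := by
    rintro (i | i) _ (j | j) _ <;>
      simp only [hw, Sum.elim_inl, Sum.elim_inr] <;> rw [star_glue_dot]
    · rw [hsingle i j]
      simp only [star_zero, zero_dotProduct, add_zero]
      by_cases h : i = j
      · subst h; simp
      · simp [h]
    · simp
    · simp
    · rw [rsv_dot]
      simp only [star_zero, zero_dotProduct, zero_add]
      by_cases h : i = j
      · subst h; simp
      · simp [h]
  refine cf_ge (dil_isHermitian M)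
    (S := Submodule.span ℂ (w '' (T : Set (Fin n ⊕ Fin n)))) ?_ ?_
  · rw [finrank_span_ortho hoT, hT, Finset.card_disjSum, Finset.card_univ, Fintype.card_fin,
      Fin.card_Ici]
    show n + n - (k : ℕ) ≤ n + (n - (k : ℕ))
    omega
  · intro x hx
    obtain ⟨a, rfl⟩ := mem_span_rep hx
    rw [hT, Finset.sum_disjSum]
    set U : Fin n → ℂ := ∑ i : Fin n, a (Sum.inl i) • (Pi.single i 1 : Fin n → ℂ) with hU
    set V : Fin n → ℂ := ∑ j ∈ Finset.Ici k, a (Sum.inr j) • rsv M j with hV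
    have hxg : (∑ i : Fin n, a (Sum.inl i) • w (Sum.inl i))
        + (∑ j ∈ Finset.Ici k, a (Sum.inr j) • w (Sum.inr j)) = glue U V := by
      have h1 : ∑ i : Fin n, a (Sum.inl i) • w (Sum.inl i) = lglue1 U := by
        rw [hU, map_sum]
        refine Finset.sum_congr rfl fun i _ => ?_
        rw [LinearMap.map_smul]
        simp [hw, lglue1]
      have h2 : ∑ j ∈ Finset.Ici k, a (Sum.inr j) • w (Sum.inr j) = lglue2 V := by
        rw [hV, map_sum]
        refine Finset.sum_congr rfl fun j _ => ?_
        rw [LinearMap.map_smul]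
        simp [hw, lglue2]
      rw [h1, h2, ← lglue_split]
    rw [hxg]
    have hVmem : V ∈ Submodule.span ℂ
        (sbasis (isHermitian_conjTranspose_mul_self M) '' ((Finset.Ici k) : Set (Fin n))) := by
      rw [hV]
      refine Submodule.sum_mem _ fun j hj => Submodule.smul_mem _ _ (Submodule.subset_span ?_)
      exact ⟨j, by simpa using hj, rfl⟩
    have hMV : nsq (M *ᵥ V) ≤ (sgs M k) ^ 2 * nsq V := by
      rw [nsq_mulVec, sq_sgs]
      exact qf_le_on_span _ (fun i hi => sev_antitone _ (Finset.mem_Ici.mp hi)) hVmem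
    have hq := qf_dil M U V
    have ham := amgm (sgs_nonneg M k) U (M *ᵥ V) V hMV
    rw [hq, nsq_glue]
    linarith

end dilsing

section dilsym

variable {n : ℕ} (M : Matrix (Fin n) (Fin n) ℂ)

/-- the sign-flip involution -/
noncomputable def Jf : (Fin (n + n) → ℂ) →ₗ[ℂ] (Fin (n + n) → ℂ) where
  toFun x := glue (fun i => x (finSumFinEquiv (Sum.inl i)))
    (fun i => - x (finSumFinEquiv (Sum.inr i)))
  map_add' a b := by
    funext i
    rcases h : finSumFinEquiv.symm i with s | s <;> simp [glue, h] <;> ring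
  map_smul' c a := by
    funext i
    rcases h : finSumFinEquiv.symm i with s | s <;> simp [glue, h] <;> ring

lemma glue_eta (x : Fin (n + n) → ℂ) :
    glue (fun i => x (finSumFinEquiv (Sum.inl i))) (fun i => x (finSumFinEquiv (Sum.inr i)))
      = x := by
  funext i
  rcases h : finSumFinEquiv.symm i with s | s <;>
  · simp only [glue, h, Sum.elim_inl, Sum.elim_inr]
    congr
    rw [← h, Equiv.apply_symm_apply]

lemma Jf_glue (u v : Fin n → ℂ) : Jf (glue u v) = glue u (-v) := by
  have h1 : (fun i => (glue u v) (finSumFinEquiv (Sum.inl i))) = u := by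
    funext i; simp only [glue, Equiv.symm_apply_apply, Sum.elim_inl]
  have h2 : (fun i => - (glue u v) (finSumFinEquiv (Sum.inr i))) = -v := by
    funext i; simp only [glue, Equiv.symm_apply_apply, Sum.elim_inr, Pi.neg_apply]
  show glue (fun i => (glue u v) (finSumFinEquiv (Sum.inl i)))
    (fun i => - (glue u v) (finSumFinEquiv (Sum.inr i))) = glue u (-v)
  rw [h1, h2]

lemma Jf_invol : Function.Involutive (Jf (n := n)) := by
  intro x
  conv_rhs => rw [← glue_eta x]
  conv_lhs => rw [← glue_eta x]
  rw [Jf_glue, Jf_glue, neg_neg]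

/-- the sign-flip involution as a linear equivalence -/
noncomputable def JE : (Fin (n + n) → ℂ) ≃ₗ[ℂ] (Fin (n + n) → ℂ) :=
  LinearEquiv.ofInvolutive Jf Jf_invol

lemma nsq_neg {d : ℕ} (x : Fin d → ℂ) : nsq (-x) = nsq x := by
  unfold nsq
  rw [star_neg, neg_dotProduct, dotProduct_neg, neg_neg]

lemma nsq_Jf (x : Fin (n + n) → ℂ) : nsq (Jf x) = nsq x := by
  conv_lhs => rw [← glue_eta x]
  conv_rhs => rw [← glue_eta x]
  rw [Jf_glue, nsq_glue, nsq_neg, nsq_glue]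

lemma qf_dil_Jf (x : Fin (n + n) → ℂ) : qf (dil M) (Jf x) = - qf (dil M) x := by
  conv_lhs => rw [← glue_eta x]
  conv_rhs => rw [← glue_eta x]
  rw [Jf_glue, qf_dil, qf_dil, Matrix.mulVec_neg, dotProduct_neg, Complex.neg_re]
  ring

lemma sev_dil_le_neg_rev (i : Fin (n + n)) :
    sev (dil_isHermitian M) i ≤ - sev (dil_isHermitian M) i.rev := by
  refine cf_ge (dil_isHermitian M)
    (S := Submodule.map (JE.toLinearMap)
      (Submodule.span ℂ (sbasis (dil_isHermitian M)
        '' ((Finset.Iic i.rev) : Set (Fin (n + n)))))) ?_ ?_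
  · rw [LinearEquiv.finrank_map_eq, finrank_span_sbasis, Fin.card_Iic, Fin.val_rev]
    omega
  · intro x hx
    obtain ⟨y, hy, rfl⟩ := Submodule.mem_map.mp hx
    have h1 : sev (dil_isHermitian M) i.rev * nsq y ≤ qf (dil M) y :=
      qf_ge_on_span _ (fun j hj => sev_antitone _ (Finset.mem_Iic.mp hj)) hy
    have h2 : (JE.toLinearMap) y = Jf y := rfl
    rw [h2, qf_dil_Jf, nsq_Jf]
    linarith

lemma sev_dil_ge_neg_rev (i : Fin (n + n)) :
    - sev (dil_isHermitian M) i.rev ≤ sev (dil_isHermitian M) i := by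
  refine cf_le (dil_isHermitian M)
    (S := Submodule.map (JE.toLinearMap)
      (Submodule.span ℂ (sbasis (dil_isHermitian M)
        '' ((Finset.Ici i.rev) : Set (Fin (n + n)))))) ?_ ?_
  · rw [LinearEquiv.finrank_map_eq, finrank_span_sbasis, Fin.card_Ici, Fin.val_rev]
    have := i.isLt
    omega
  · intro x hx
    obtain ⟨y, hy, rfl⟩ := Submodule.mem_map.mp hx
    have h1 : qf (dil M) y ≤ sev (dil_isHermitian M) i.rev * nsq y :=
      qf_le_on_span _ (fun j hj => sev_antitone _ (Finset.mem_Ici.mp hj)) hy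
    have h2 : (JE.toLinearMap) y = Jf y := rfl
    rw [h2, qf_dil_Jf, nsq_Jf]
    linarith

lemma sev_dil_rev (i : Fin (n + n)) :
    sev (dil_isHermitian M) i = - sev (dil_isHermitian M) i.rev :=
  le_antisymm (sev_dil_le_neg_rev M i) (sev_dil_ge_neg_rev M i)

lemma svals_eq_sgs (k : ℕ) (hk : k - 1 < n) :
    svals M k = sgs M ⟨k - 1, hk⟩ := by
  have hms := Tuple.monotone_sort ((Matrix.isHermitian_conjTranspose_mul_self M).eigenvalues)
  have hmono : Monotone ((fun i =>
        Real.sqrt ((Matrix.isHermitian_conjTranspose_mul_self M).eigenvalues i))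
      ∘ (Tuple.sort (Matrix.isHermitian_conjTranspose_mul_self M).eigenvalues)) :=
    fun a b' hab => Real.sqrt_le_sqrt (by exact hms hab)
  have hcomp := (Tuple.comp_sort_eq_comp_iff_monotone
      (f := fun i => Real.sqrt ((Matrix.isHermitian_conjTranspose_mul_self M).eigenvalues i))
      (σ := Tuple.sort (Matrix.isHermitian_conjTranspose_mul_self M).eigenvalues)).mpr hmono
  simp only [svals]
  rw [dif_pos hk]
  simp only [sgs, sev]
  exact (congrFun hcomp (Fin.rev ⟨k - 1, hk⟩)).symm

lemma nevs_dil (k : ℕ) (h1 : 1 ≤ k) (h2 : k ≤ n) :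
    nevs (dil_isHermitian M) k = svals M k := by
  have hkn : k - 1 < n := by omega
  have hk2 : k - 1 < n + n := by omega
  rw [nevs_eq _ hk2, svals_eq_sgs M k hkn]
  exact le_antisymm (sev_dil_le M ⟨k - 1, hkn⟩ hk2) (sev_dil_ge M ⟨k - 1, hkn⟩ hk2)

lemma nevs_dil_neg (k : ℕ) (h1 : 1 ≤ k) (h2 : k ≤ n) :
    nevs (dil_isHermitian M) (n + n + 1 - k) = - svals M k := by
  have hkn : k - 1 < n := by omega
  have hk2 : k - 1 < n + n := by omega
  have hidx : n + n + 1 - k - 1 < n + n := by omega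
  rw [nevs_eq _ hidx]
  have hrev : (⟨n + n + 1 - k - 1, hidx⟩ : Fin (n + n)) = (⟨k - 1, hk2⟩ : Fin (n + n)).rev := by
    apply Fin.ext
    rw [Fin.val_rev]
    show n + n + 1 - k - 1 = n + n - (k - 1 + 1)
    omega
  rw [hrev]
  have h3 : sev (dil_isHermitian M) ((⟨k - 1, hk2⟩ : Fin (n + n)).rev)
      = - sev (dil_isHermitian M) ⟨k - 1, hk2⟩ := by
    have := sev_dil_rev M (⟨k - 1, hk2⟩ : Fin (n + n))
    linarith
  rw [h3]
  congr 1
  have h4 := nevs_dil M k h1 h2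
  rw [nevs_eq _ hk2] at h4
  exact h4

end dilsym

end SVaux

theorem stmt11 {n : ℕ} (A B : Matrix (Fin n) (Fin n) ℂ)
    (b : ℕ) (hb : 1 ≤ b)
    (K₃ K₄ : Finset ℕ) (hK : Disjoint K₃ K₄)
    (t s : ℕ → ℕ)
    (hts : ∀ k ∈ K₃ ∪ K₄, 1 ≤ t k ∧ t k ≤ s k ∧ s k ≤ n ∧ b - 1 ≤ s k - t k)
    (htinj : Set.InjOn t K₃) (hsinj : Set.InjOn s K₄)
    (himg : ∀ k ∈ K₃, ∀ l ∈ K₄, t k ≠ s l)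
    (hr : b + (K₃.card + K₄.card) - 1 ≤ n) :
    ∑ k ∈ K₃, svals (A + B) (s k) - ∑ k ∈ K₄, svals (A + B) (t k) ≤
      ∑ k ∈ K₃, svals A (t k) - ∑ k ∈ K₄, svals A (s k) +
        ∑ k ∈ Finset.Icc b (b + (K₃.card + K₄.card) - 1), svals B k := by
  classical
  have hdA := SVaux.dil_isHermitian A
  have hdB := SVaux.dil_isHermitian B
  have hdC := SVaux.dil_isHermitian (A + B)
  have hXY : (SVaux.dil A + SVaux.dil B).IsHermitian := by
    rw [← SVaux.dil_add]
    exact hdC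
  set p : ℕ → ℕ := fun k => if k ∈ K₃ then t k else n + n + 1 - s k with hp
  set q : ℕ → ℕ := fun k => if k ∈ K₃ then s k else n + n + 1 - t k with hq
  have hcard : (K₃ ∪ K₄).card = K₃.card + K₄.card := Finset.card_union_of_disjoint hK
  have hpq : ∀ k ∈ K₃ ∪ K₄, 1 ≤ p k ∧ p k + b ≤ q k + 1 ∧ q k ≤ n + n := by
    intro k hk
    obtain ⟨ht1, hts', hsn, hb1⟩ := hts k hk
    rcases Finset.mem_union.mp hk with h3 | h4
    · simp only [hp, hq, if_pos h3]
      exact ⟨ht1, by omega, by omega⟩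
    · have hk3 : k ∉ K₃ := fun hc => (Finset.disjoint_left.mp hK hc) h4
      simp only [hp, hq, if_neg hk3]
      exact ⟨by omega, by omega, by omega⟩
  have hpinj : Set.InjOn p (((K₃ ∪ K₄) : Finset ℕ) : Set ℕ) := by
    intro a ha b' hb' heq
    have ha' := Finset.mem_union.mp (Finset.mem_coe.mp ha)
    have hb'' := Finset.mem_union.mp (Finset.mem_coe.mp hb')
    simp only [hp] at heq
    rcases ha' with ha3 | ha4 <;> rcases hb'' with hb3 | hb4
    · rw [if_pos ha3, if_pos hb3] at heq
      exact htinj (Finset.mem_coe.mpr ha3) (Finset.mem_coe.mpr hb3) heq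
    · have hb3' : b' ∉ K₃ := fun hc => (Finset.disjoint_left.mp hK hc) hb4
      rw [if_pos ha3, if_neg hb3'] at heq
      obtain ⟨ht1, hts', hsn, -⟩ := hts a (Finset.mem_union_left _ ha3)
      obtain ⟨ht1', hts'', hsn', -⟩ := hts b' (Finset.mem_union_right _ hb4)
      omega
    · have ha3' : a ∉ K₃ := fun hc => (Finset.disjoint_left.mp hK hc) ha4
      rw [if_neg ha3', if_pos hb3] at heq
      obtain ⟨ht1, hts', hsn, -⟩ := hts a (Finset.mem_union_right _ ha4)
      obtain ⟨ht1', hts'', hsn', -⟩ := hts b' (Finset.mem_union_left _ hb3)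
      omega
    · have ha3' : a ∉ K₃ := fun hc => (Finset.disjoint_left.mp hK hc) ha4
      have hb3' : b' ∉ K₃ := fun hc => (Finset.disjoint_left.mp hK hc) hb4
      rw [if_neg ha3', if_neg hb3'] at heq
      obtain ⟨ht1, hts', hsn, -⟩ := hts a (Finset.mem_union_right _ ha4)
      obtain ⟨ht1', hts'', hsn', -⟩ := hts b' (Finset.mem_union_right _ hb4)
      have : s a = s b' := by omega
      exact hsinj (Finset.mem_coe.mpr ha4) (Finset.mem_coe.mpr hb4) this
  have hbr : b + (K₃ ∪ K₄).card - 1 ≤ n + n := by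
    rw [hcard]; omega
  have hmain := SVaux.main_ineq (SVaux.dil A) (SVaux.dil B) hdA hdB hXY b hb
    (K₃ ∪ K₄) p q hpq hpinj hbr
  have hL : ∑ k ∈ K₃ ∪ K₄, (SVaux.nevs hXY (q k) - SVaux.nevs hdA (p k))
      = (∑ k ∈ K₃, (svals (A + B) (s k) - svals A (t k)))
        + (∑ k ∈ K₄, (svals A (s k) - svals (A + B) (t k))) := by
    rw [Finset.sum_union hK]
    congr 1
    · refine Finset.sum_congr rfl fun k hk3 => ?_
      obtain ⟨ht1, hts', hsn, -⟩ := hts k (Finset.mem_union_left _ hk3)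
      simp only [hp, hq, if_pos hk3]
      rw [SVaux.nevs_congr hXY hdC (SVaux.dil_add A B).symm]
      rw [SVaux.nevs_dil (A + B) (s k) (by omega) hsn]
      rw [SVaux.nevs_dil A (t k) ht1 (by omega)]
    · refine Finset.sum_congr rfl fun k hk4 => ?_
      have hk3 : k ∉ K₃ := fun hc => (Finset.disjoint_left.mp hK hc) hk4
      obtain ⟨ht1, hts', hsn, -⟩ := hts k (Finset.mem_union_right _ hk4)
      simp only [hp, hq, if_neg hk3]
      rw [SVaux.nevs_congr hXY hdC (SVaux.dil_add A B).symm]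
      rw [SVaux.nevs_dil_neg (A + B) (t k) ht1 (by omega)]
      rw [SVaux.nevs_dil_neg A (s k) (by omega) hsn]
      ring
  have hR : ∑ i ∈ Finset.Icc b (b + (K₃ ∪ K₄).card - 1), SVaux.nevs hdB i
      = ∑ i ∈ Finset.Icc b (b + (K₃.card + K₄.card) - 1), svals B i := by
    rw [hcard]
    refine Finset.sum_congr rfl fun i hi => ?_
    rw [Finset.mem_Icc] at hi
    exact SVaux.nevs_dil B i (by omega) (by omega)
  rw [hL, hR] at hmain
  rw [Finset.sum_sub_distrib, Finset.sum_sub_distrib] at hmain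
  linarith
end
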